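/- arXiv:2509.03384 — 7 statements merged into one kernel-verified Lean document; each statement's English description precedes it below -/
import Mathlib

section
/- Let H be a separable Hilbert space, T a bounded operator on H, and {P_n} an increasing sequence of finite rank orthogonal projections converging strongly to the identity with ‖T P_n − P_n T‖ → 0. Then for every ε > 0 there exists a compact operator K with ‖K‖ < ε such that T − K commutes with a sequence {Q_n} of mutually orthogonal finite rank projections summing strongly to the identity (i.e., T − K is block-diagonal). -/
open Filter

set_option linter.unusedVariables false

section aux
set_option linter.unusedSectionVars false
variable {H : Type*} [NormedAddCommGroup H] [InnerProductSpace ℂ H] [CompleteSpace H]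

lemma aux_proj_norm_le {p : H →L[ℂ] H} (h1 : IsIdempotentElem p) (h2 : IsSelfAdjoint p) :
    ‖p‖ ≤ 1 := by
  have h := CStarRing.norm_star_mul_self (x := p)
  rw [h2.star_eq, h1.eq] at h
  nlinarith [norm_nonneg p]


lemma aux_fin_compact {f : H →L[ℂ] H} (h : FiniteDimensional ℂ (LinearMap.range (f : H →ₗ[ℂ] H))) :
    IsCompactOperator f := by
  haveI : ProperSpace (LinearMap.range (f : H →ₗ[ℂ] H)) := FiniteDimensional.proper ℂ _
  refine ⟨Subtype.val '' Metric.closedBall (0 : LinearMap.range (f : H →ₗ[ℂ] H)) ‖f‖,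
    (isCompact_closedBall _ _).image continuous_subtype_val, ?_⟩
  filter_upwards [Metric.ball_mem_nhds (0 : H) one_pos] with x hx
  refine ⟨⟨f x, LinearMap.mem_range_self (f : H →ₗ[ℂ] H) x⟩, ?_, rfl⟩
  simp only [Metric.mem_closedBall, dist_zero_right]
  calc ‖(⟨f x, LinearMap.mem_range_self (f : H →ₗ[ℂ] H) x⟩ : LinearMap.range (f : H →ₗ[ℂ] H))‖ = ‖f x‖ := rfl
  _ ≤ ‖f‖ * ‖x‖ := f.le_opNorm x
  _ ≤ ‖f‖ * 1 := by
      have h2 := Metric.mem_ball.mp hx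
      rw [dist_zero_right] at h2
      exact mul_le_mul_of_nonneg_left h2.le (norm_nonneg f)
  _ = ‖f‖ := mul_one _

section ringlemmas
variable {R : Type*} [Ring R]

lemma aux_ring1 {s t q : R} (hs : s * s = s) (hq : s * q = q) :
    (1 - s) * (t * s - s * t) * q = (1 - s) * t * q := by
  have h : (1 - s) * (t * s - s * t) * q
      = (1 - s) * t * (s * q) - (1 - s) * s * (t * q) := by noncomm_ring
  have h0 : (1 - s) * s = 0 := by rw [sub_mul, one_mul, hs, sub_self]
  rw [h, hq, h0, zero_mul, sub_zero]

lemma aux_ring2 {s t q : R} (hs : s * s = s) (hq : q * s = q) :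
    q * (t * s - s * t) * (1 - s) = -(q * t * (1 - s)) := by
  have h : q * (t * s - s * t) * (1 - s)
      = q * t * (s * (1 - s)) - q * s * (t * (1 - s)) := by noncomm_ring
  have h0 : s * (1 - s) = 0 := by rw [mul_sub, mul_one, hs, sub_self]
  rw [h, h0, mul_zero, hq, zero_sub, mul_assoc]

lemma aux_ringm {x t q p : R} :
    (x * t * q + q * t * x) * p = x * t * (q * p) + q * t * (x * p) := by noncomm_ring

lemma aux_ringl {x t q p : R} :
    p * (x * t * q + q * t * x) = (p * x) * t * q + (p * q) * t * x := by noncomm_ring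

lemma aux_ringf1 {s' s t : R} :
    t * (s' - s) - ((1 - s') * t * (s' - s) + s * t * (s' - s))
      = (s' - s) * t * (s' - s) := by noncomm_ring

lemma aux_ringf2 {s' s t : R} :
    (s' - s) * t - ((s' - s) * t * s + (s' - s) * t * (1 - s'))
      = (s' - s) * t * (s' - s) := by noncomm_ring

end ringlemmas

end aux


/-- Halmos' theorem. Every bounded quasidiagonal operator is a
compact perturbation (of arbitrarily small norm) of a block-diagonal operator. -/
theorem stmt_0
    {H : Type*} [NormedAddCommGroup H] [InnerProductSpace ℂ H] [CompleteSpace H]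
    [TopologicalSpace.SeparableSpace H]
    (T : H →L[ℂ] H)
    (P : ℕ → H →L[ℂ] H)
    (hproj : ∀ n, IsIdempotentElem (P n))
    (hsa : ∀ n, IsSelfAdjoint (P n))
    (hfin : ∀ n, FiniteDimensional ℂ (LinearMap.range (P n : H →ₗ[ℂ] H)))
    (hmono : ∀ n, LinearMap.range (P n : H →ₗ[ℂ] H) ≤ LinearMap.range (P (n + 1) : H →ₗ[ℂ] H))
    (hstrong : ∀ x : H, Filter.Tendsto (fun n => P n x) Filter.atTop (nhds x))
    (hqd : Filter.Tendsto (fun n => ‖T * P n - P n * T‖) Filter.atTop (nhds 0))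
    {ε : ℝ} (hε : 0 < ε) :
    ∃ K : H →L[ℂ] H, IsCompactOperator K ∧ ‖K‖ < ε ∧
      ∃ Q : ℕ → H →L[ℂ] H,
        (∀ n, IsIdempotentElem (Q n)) ∧
        (∀ n, IsSelfAdjoint (Q n)) ∧
        (∀ n, FiniteDimensional ℂ (LinearMap.range (Q n : H →ₗ[ℂ] H))) ∧
        (∀ m n, m ≠ n → Q m * Q n = 0) ∧
        (∀ x : H, HasSum (fun n => Q n x) x) ∧
        (∀ n, (T - K) * Q n = Q n * (T - K)) := by
  classical
  -- nested ranges
  have hmono' : ∀ {m n : ℕ}, m ≤ n → LinearMap.range (P m : H →ₗ[ℂ] H) ≤ LinearMap.range (P n : H →ₗ[ℂ] H) := by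
    intro m n h
    induction h with
    | refl => exact le_rfl
    | step h ih => exact ih.trans (hmono _)
  have hfix : ∀ n y, y ∈ LinearMap.range (P n : H →ₗ[ℂ] H) → P n y = y := by
    rintro n y ⟨z, rfl⟩
    calc P n (P n z) = (P n * P n) z := rfl
    _ = P n z := by rw [(hproj n).eq]
  have hPP : ∀ {m n : ℕ}, m ≤ n → P n * P m = P m := by
    intro m n h
    ext x
    exact hfix n (P m x) (hmono' h (LinearMap.mem_range_self (P m : H →ₗ[ℂ] H) x))
  have hPP' : ∀ {m n : ℕ}, m ≤ n → P m * P n = P m := by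
    intro m n h
    have h2 := congrArg star (hPP h)
    rwa [star_mul, (hsa m).star_eq, (hsa n).star_eq] at h2
  -- extraction
  obtain ⟨φ, hφ, hφc⟩ := extraction_forall_of_eventually
    (fun k : ℕ => hqd.eventually_lt_const (show (0:ℝ) < ε / 2 ^ (k + 3) by positivity))
  -- the nested projections S with S 0 = 0
  set S : ℕ → H →L[ℂ] H := fun k => Nat.casesOn k 0 (fun j => P (φ j)) with hSdef
  have hS0 : S 0 = 0 := rfl
  have hSsucc : ∀ k, S (k + 1) = P (φ k) := fun k => rfl
  have hSidem : ∀ k, IsIdempotentElem (S k) := by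
    intro k
    cases k with
    | zero => exact IsIdempotentElem.zero
    | succ j => exact hproj (φ j)
  have hSsa : ∀ k, IsSelfAdjoint (S k) := by
    intro k
    cases k with
    | zero => rw [hS0]; exact IsSelfAdjoint.zero _
    | succ j => exact hsa (φ j)
  have hSS : ∀ {a b : ℕ}, a ≤ b → S b * S a = S a := by
    intro a b h
    match a, b with
    | 0, b => rw [hS0, mul_zero]
    | (j+1), (k+1) => exact hPP (hφ.monotone (by omega))
  have hSS' : ∀ {a b : ℕ}, a ≤ b → S a * S b = S a := by
    intro a b h
    match a, b with
    | 0, b => rw [hS0, zero_mul]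
    | (j+1), (k+1) => exact hPP' (hφ.monotone (by omega))

  -- the blocks Q
  set Q : ℕ → H →L[ℂ] H := fun k => S (k+1) - S k with hQdef
  have hQidem : ∀ k, IsIdempotentElem (Q k) := by
    intro k
    show (S (k+1) - S k) * (S (k+1) - S k) = S (k+1) - S k
    rw [sub_mul, mul_sub, mul_sub, (hSidem (k+1)).eq, hSS (Nat.le_succ k),
      hSS' (Nat.le_succ k), (hSidem k).eq]
    abel
  have hQsa : ∀ k, IsSelfAdjoint (Q k) := fun k => (hSsa (k+1)).sub (hSsa k)
  have hQorth : ∀ m n, m ≠ n → Q m * Q n = 0 := by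
    intro m n h
    rcases lt_or_gt_of_ne h with h1 | h1
    · show (S (m+1) - S m) * (S (n+1) - S n) = 0
      rw [sub_mul, mul_sub, mul_sub, hSS' (by omega : m+1 ≤ n+1), hSS' (by omega : m+1 ≤ n),
        hSS' (by omega : m ≤ n+1), hSS' (by omega : m ≤ n)]
      abel
    · show (S (m+1) - S m) * (S (n+1) - S n) = 0
      rw [sub_mul, mul_sub, mul_sub, hSS (by omega : n+1 ≤ m+1), hSS (by omega : n ≤ m+1),
        hSS (by omega : n+1 ≤ m), hSS (by omega : n ≤ m)]
      abel
  have hQfin : ∀ k, FiniteDimensional ℂ (LinearMap.range (Q k : H →ₗ[ℂ] H)) := by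
    intro k
    haveI := hfin (φ k)
    have hQfact : Q k = S (k+1) * (1 - S k) := by
      rw [hQdef]
      rw [mul_sub, mul_one, hSS (Nat.le_succ k)]
    have hle : LinearMap.range ((S (k+1) * (1 - S k) : H →L[ℂ] H) : H →ₗ[ℂ] H) ≤ LinearMap.range (P (φ k) : H →ₗ[ℂ] H) := by
      rintro y ⟨x, rfl⟩
      exact ⟨(1 - S k) x, rfl⟩
    rw [hQfact]
    exact Submodule.finiteDimensional_of_le hle
  have hQnorm : ∀ k, ‖Q k‖ ≤ 1 := fun k => aux_proj_norm_le (hQidem k) (hQsa k)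
  have hSnorm : ∀ k, ‖(1 : H →L[ℂ] H) - S k‖ ≤ 1 := fun k =>
    aux_proj_norm_le (hSidem k).one_sub ((IsSelfAdjoint.one _).sub (hSsa k))
  have hSQbig : ∀ {m b : ℕ}, m + 1 ≤ b → S b * Q m = Q m ∧ Q m * S b = Q m := by
    intro m b h
    constructor
    · show S b * (S (m+1) - S m) = S (m+1) - S m
      rw [mul_sub, hSS (by omega : m+1 ≤ b), hSS (by omega : m ≤ b)]
    · show (S (m+1) - S m) * S b = S (m+1) - S m
      rw [sub_mul, hSS' (by omega : m+1 ≤ b), hSS' (by omega : m ≤ b)]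
  have hSQsmall : ∀ {m a : ℕ}, a ≤ m → S a * Q m = 0 ∧ Q m * S a = 0 := by
    intro m a h
    constructor
    · show S a * (S (m+1) - S m) = 0
      rw [mul_sub, hSS' (by omega : a ≤ m+1), hSS' h]
      exact sub_self _
    · show (S (m+1) - S m) * S a = 0
      rw [sub_mul, hSS (by omega : a ≤ m+1), hSS h]
      exact sub_self _
  -- telescoping
  have htel : ∀ n, ∑ k ∈ Finset.range n, Q k = S n := by
    intro n
    have := Finset.sum_range_sub (f := S) n
    rw [hS0, sub_zero] at this
    exact this

  -- the correction operator
  set A : ℕ → H →L[ℂ] H :=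
    fun k => (1 - S (k+1)) * T * Q k + Q k * T * (1 - S (k+1)) with hAdef
  have hXS : ∀ k, ((1 : H →L[ℂ] H) - S (k+1)) * S (k+1) = 0 := by
    intro k
    rw [sub_mul, one_mul, (hSidem (k+1)).eq, sub_self]
  have hSX : ∀ k, S (k+1) * ((1 : H →L[ℂ] H) - S (k+1)) = 0 := by
    intro k
    rw [mul_sub, mul_one, (hSidem (k+1)).eq, sub_self]
  have hA1 : ∀ k, (1 - S (k+1)) * (T * S (k+1) - S (k+1) * T) * Q k
      = (1 - S (k+1)) * T * Q k := fun k =>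
    aux_ring1 (hSidem (k+1)).eq (hSQbig (le_refl (k+1))).1
  have hA2 : ∀ k, Q k * (T * S (k+1) - S (k+1) * T) * (1 - S (k+1))
      = -(Q k * T * (1 - S (k+1))) := fun k =>
    aux_ring2 (hSidem (k+1)).eq (hSQbig (le_refl (k+1))).2
  have hAnorm : ∀ k, ‖A k‖ ≤ ε / 2 ^ (k + 2) := by
    intro k
    have hc : ‖T * S (k+1) - S (k+1) * T‖ ≤ ε / 2 ^ (k+3) := by
      rw [hSsucc]
      exact (hφc k).le
    have habc : ∀ (a b c : H →L[ℂ] H), ‖a‖ ≤ 1 → ‖c‖ ≤ 1 → ‖a * b * c‖ ≤ ‖b‖ := by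
      intro a b c ha hc2
      calc ‖a * b * c‖ ≤ ‖a * b‖ * ‖c‖ := norm_mul_le _ _
        _ ≤ ‖a‖ * ‖b‖ * ‖c‖ := by
            exact mul_le_mul_of_nonneg_right (norm_mul_le _ _) (norm_nonneg _)
        _ ≤ 1 * ‖b‖ * 1 := by gcongr
        _ = ‖b‖ := by ring
    have e1 : ‖(1 - S (k+1)) * T * Q k‖ ≤ ε / 2 ^ (k+3) := by
      rw [← hA1 k]
      exact (habc _ _ _ (hSnorm (k+1)) (hQnorm k)).trans hc
    have e2 : ‖Q k * T * (1 - S (k+1))‖ ≤ ε / 2 ^ (k+3) := by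
      rw [← norm_neg, ← hA2 k]
      exact (habc _ _ _ (hQnorm k) (hSnorm (k+1))).trans hc
    calc ‖A k‖ ≤ ‖(1 - S (k+1)) * T * Q k‖ + ‖Q k * T * (1 - S (k+1))‖ := norm_add_le _ _
      _ ≤ ε / 2 ^ (k+3) + ε / 2 ^ (k+3) := add_le_add e1 e2
      _ = ε / 2 ^ (k+2) := by
          rw [pow_add, pow_add]
          ring
  have hgeom : Summable (fun k : ℕ => ε / 2 ^ (k + 2)) := by
    have h1 : Summable (fun k : ℕ => (ε/4) * (1/2:ℝ)^k) := summable_geometric_two.mul_left _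
    exact h1.congr (fun k => by rw [pow_add, one_div, inv_pow]; ring)
  have hAsummable : Summable A := Summable.of_norm_bounded hgeom hAnorm
  set K : H →L[ℂ] H := ∑' k, A k with hKdef
  have hKnorm : ‖K‖ < ε := by
    have h0 : Summable fun k => ‖A k‖ :=
      Summable.of_nonneg_of_le (fun k => norm_nonneg _) hAnorm hgeom
    have h1 : ‖K‖ ≤ ∑' k, ‖A k‖ := norm_tsum_le_tsum_norm h0
    have h2 : ∑' k, ‖A k‖ ≤ ∑' k, ε / 2 ^ (k + 2) := Summable.tsum_le_tsum hAnorm h0 hgeom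
    have h3 : ∑' k : ℕ, ε / 2 ^ (k + 2) = ε / 2 := by
      have e : ∀ k : ℕ, ε / 2 ^ (k + 2) = (ε/4) * (1/2:ℝ)^k := fun k => by
        rw [pow_add, one_div, inv_pow]; ring
      rw [tsum_congr e, tsum_mul_left, tsum_geometric_two]
      ring
    have := h1.trans (h2.trans_eq h3)
    linarith
  have hKcompact : IsCompactOperator K := by
    have htend : Tendsto (fun n => ∑ k ∈ Finset.range n, A k) atTop (nhds K) :=
      hAsummable.hasSum.tendsto_sum_nat
    apply isCompactOperator_of_tendsto htend
    filter_upwards with n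
    induction n with
    | zero =>
        rw [Finset.range_zero, Finset.sum_empty]
        exact isCompactOperator_zero
    | succ n ih =>
        rw [Finset.sum_range_succ]
        have hq : IsCompactOperator (Q n) := aux_fin_compact (hQfin n)
        have c1 : IsCompactOperator (⇑((1 - S (n+1)) * T * Q n)) := by
          change IsCompactOperator (⇑((1 - S (n+1)) * T) ∘ ⇑(Q n))
          exact hq.continuous_comp ((1 - S (n+1)) * T).continuous
        have c2 : IsCompactOperator (⇑(Q n * T * (1 - S (n+1)))) := by
          rw [mul_assoc]
          change IsCompactOperator (⇑(Q n) ∘ ⇑(T * (1 - S (n+1))))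
          exact hq.comp_clm (T * (1 - S (n+1)))
        exact ih.add (c1.add c2)

  -- K * Q m
  have hKQ : ∀ m, K * Q m = (1 - S (m+1)) * T * Q m + S m * T * Q m := by
    intro m
    have h1 : K * Q m = ∑' k, A k * Q m := (hAsummable.tsum_mul_right (Q m)).symm
    have h2 : ∀ k ∉ Finset.range (m+1), A k * Q m = 0 := by
      intro k hk
      have hk' : m < k := by simp only [Finset.mem_range, not_lt] at hk; omega
      show ((1 - S (k+1)) * T * Q k + Q k * T * (1 - S (k+1))) * Q m = 0
      rw [aux_ringm, hQorth k m (by omega), (show (1 - S (k+1)) * Q m = 0 from by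
        rw [sub_mul, one_mul, (hSQbig (by omega : m+1 ≤ k+1)).1, sub_self]),
        mul_zero, mul_zero, add_zero]
    rw [h1, tsum_eq_sum h2, Finset.sum_range_succ]
    have h3 : ∀ k ∈ Finset.range m, A k * Q m = Q k * T * Q m := by
      intro k hk
      have hk' : k < m := Finset.mem_range.mp hk
      show ((1 - S (k+1)) * T * Q k + Q k * T * (1 - S (k+1))) * Q m = Q k * T * Q m
      rw [aux_ringm, hQorth k m (by omega), (show (1 - S (k+1)) * Q m = Q m from by
        rw [sub_mul, one_mul, (hSQsmall (by omega : k+1 ≤ m)).1, sub_zero]),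
        mul_zero, zero_add]
    have h5 : A m * Q m = (1 - S (m+1)) * T * Q m := by
      show ((1 - S (m+1)) * T * Q m + Q m * T * (1 - S (m+1))) * Q m
        = (1 - S (m+1)) * T * Q m
      rw [aux_ringm, (hQidem m).eq, (show (1 - S (m+1)) * Q m = 0 from by
        rw [sub_mul, one_mul, (hSQbig (le_refl (m+1))).1, sub_self]),
        mul_zero, add_zero]
    rw [Finset.sum_congr rfl h3, h5]
    have h4 : ∑ k ∈ Finset.range m, Q k * T * Q m = S m * T * Q m := by
      rw [← htel m, Finset.sum_mul, Finset.sum_mul]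
    rw [h4, add_comm]
  -- Q m * K
  have hQK : ∀ m, Q m * K = Q m * T * S m + Q m * T * (1 - S (m+1)) := by
    intro m
    have h1 : Q m * K = ∑' k, Q m * A k := (hAsummable.tsum_mul_left (Q m)).symm
    have h2 : ∀ k ∉ Finset.range (m+1), Q m * A k = 0 := by
      intro k hk
      have hk' : m < k := by simp only [Finset.mem_range, not_lt] at hk; omega
      show Q m * ((1 - S (k+1)) * T * Q k + Q k * T * (1 - S (k+1))) = 0
      rw [aux_ringl, hQorth m k (by omega), (show Q m * (1 - S (k+1)) = 0 from by
        rw [mul_sub, mul_one, (hSQbig (by omega : m+1 ≤ k+1)).2, sub_self]),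
        zero_mul, zero_mul, zero_mul, add_zero]
    rw [h1, tsum_eq_sum h2, Finset.sum_range_succ]
    have h3 : ∀ k ∈ Finset.range m, Q m * A k = Q m * T * Q k := by
      intro k hk
      have hk' : k < m := Finset.mem_range.mp hk
      show Q m * ((1 - S (k+1)) * T * Q k + Q k * T * (1 - S (k+1))) = Q m * T * Q k
      rw [aux_ringl, hQorth m k (by omega), (show Q m * (1 - S (k+1)) = Q m from by
        rw [mul_sub, mul_one, (hSQsmall (by omega : k+1 ≤ m)).2, sub_zero]),
        zero_mul, zero_mul, add_zero]
    have h5 : Q m * A m = Q m * T * (1 - S (m+1)) := by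
      show Q m * ((1 - S (m+1)) * T * Q m + Q m * T * (1 - S (m+1)))
        = Q m * T * (1 - S (m+1))
      rw [aux_ringl, (hQidem m).eq, (show Q m * (1 - S (m+1)) = 0 from by
        rw [mul_sub, mul_one, (hSQbig (le_refl (m+1))).2, sub_self]),
        zero_mul, zero_mul, zero_add]
    rw [Finset.sum_congr rfl h3, h5]
    have h4 : ∑ k ∈ Finset.range m, Q m * T * Q k = Q m * T * S m := by
      rw [← htel m, Finset.mul_sum]
    rw [h4]
  -- commutation
  have hcomm : ∀ m, (T - K) * Q m = Q m * (T - K) := by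
    intro m
    have hl : (T - K) * Q m = Q m * T * Q m := by
      rw [sub_mul, hKQ m]
      simp only [hQdef]
      exact aux_ringf1
    have hr : Q m * (T - K) = Q m * T * Q m := by
      rw [mul_sub, hQK m]
      simp only [hQdef]
      exact aux_ringf2
    rw [hl, hr]
  -- the partial sums converge strongly
  have htendS : ∀ x : H, Tendsto (fun n => S n x) atTop (nhds x) := by
    intro x
    have h1 : Tendsto (fun n => P (φ n) x) atTop (nhds x) :=
      (hstrong x).comp hφ.tendsto_atTop
    have h2 : Tendsto (fun n => S (n + 1) x) atTop (nhds x) := h1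
    exact (tendsto_add_atTop_iff_nat 1).mp h2
  -- HasSum
  have hQsum : ∀ x : H, HasSum (fun n => Q n x) x := by
    intro x
    have hsummable : Summable (fun n => Q n x) := by
      rw [summable_iff_vanishing_norm]
      intro δ hδ
      obtain ⟨N, hN⟩ : ∃ N, ‖x - S N x‖ < δ := by
        obtain ⟨N, hN⟩ := (Metric.tendsto_atTop.mp (htendS x)) δ hδ
        refine ⟨N, ?_⟩
        have := hN N le_rfl
        rw [dist_eq_norm] at this
        rwa [norm_sub_rev]
      refine ⟨Finset.range N, fun t ht => ?_⟩
      have hQt : ∀ k ∈ t, N ≤ k := by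
        intro k hk
        by_contra hc
        exact (Finset.disjoint_left.mp ht hk) (Finset.mem_range.mpr (by omega))
      have hzero : (∑ k ∈ t, Q k) * S N = 0 := by
        rw [Finset.sum_mul]
        exact Finset.sum_eq_zero fun k hk => (hSQsmall (hQt k hk)).2
      have heq : ∑ k ∈ t, Q k x = (∑ k ∈ t, Q k) (x - S N x) := by
        rw [map_sub]
        have h0 : (∑ k ∈ t, Q k) (S N x) = 0 := by
          have h1 := congrArg (fun (B : H →L[ℂ] H) => B x) hzero
          simpa using h1
        rw [h0, sub_zero, ContinuousLinearMap.sum_apply]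
      have hidem : IsIdempotentElem (∑ k ∈ t, Q k) := by
        show (∑ k ∈ t, Q k) * (∑ k ∈ t, Q k) = ∑ k ∈ t, Q k
        rw [Finset.sum_mul_sum]
        refine Finset.sum_congr rfl fun i hi => ?_
        rw [Finset.sum_eq_single i (fun j _ hne => hQorth i j (fun h => hne h.symm))
          (fun hni => absurd hi hni), (hQidem i).eq]
      have hsa' : IsSelfAdjoint (∑ k ∈ t, Q k) := by
        show star _ = _
        rw [star_sum]
        exact Finset.sum_congr rfl fun i _ => (hQsa i).star_eq
      have hnorm1 : ‖∑ k ∈ t, Q k‖ ≤ 1 := aux_proj_norm_le hidem hsa'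
      calc ‖∑ k ∈ t, Q k x‖ = ‖(∑ k ∈ t, Q k) (x - S N x)‖ := by rw [heq]
        _ ≤ ‖∑ k ∈ t, Q k‖ * ‖x - S N x‖ := ContinuousLinearMap.le_opNorm _ _
        _ ≤ 1 * ‖x - S N x‖ := mul_le_mul_of_nonneg_right hnorm1 (norm_nonneg _)
        _ = ‖x - S N x‖ := one_mul _
        _ < δ := hN
    obtain ⟨y, hy⟩ := hsummable
    have h1 : Tendsto (fun n => ∑ k ∈ Finset.range n, Q k x) atTop (nhds y) :=
      hy.tendsto_sum_nat
    have h2 : (fun n => ∑ k ∈ Finset.range n, Q k x) = fun n => S n x := by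
      funext n
      rw [← ContinuousLinearMap.sum_apply, htel n]
    rw [h2] at h1
    have hyx : y = x := tendsto_nhds_unique h1 (htendS x)
    rwa [hyx] at hy
  exact ⟨K, hKcompact, hKnorm, Q, hQidem, hQsa, hQfin, hQorth, hQsum, hcomm⟩
end

section
/- Let K be a compact operator on a separable Hilbert space H with orthonormal basis {e_n}, and let {R_n} be any sequence of finite rank orthogonal projections onto span{e_{k_1},…,e_{k_n}} for a strictly increasing sequence {k_n} ⊆ ℕ. Then ‖[K, R_n]‖₂ / ‖R_n‖₂ → 0 as n → ∞, where ‖·‖₂ is the Hilbert–Schmidt norm. -/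
open Filter

/-- The Hilbert–Schmidt norm of (the restriction to basis vectors of) an
operator `A`, computed with respect to the orthonormal basis `e`. -/
noncomputable def hsNormOn {H : Type*} [NormedAddCommGroup H] [InnerProductSpace ℂ H]
    (e : HilbertBasis ℕ ℂ H) (A : H → H) : ℝ :=
  Real.sqrt (∑' j, ‖A (e j)‖ ^ 2)

section Aux

variable {H : Type*} [NormedAddCommGroup H] [InnerProductSpace ℂ H] [CompleteSpace H]

local notation "⟪" x ", " y "⟫" => @inner ℂ _ _ x y

/-- basis coefficients of a fixed vector tend to zero -/
lemma aux_coeff_tendsto (e : HilbertBasis ℕ ℂ H) (x : H) :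
    Tendsto (fun j => (⟪e j, x⟫ : ℂ)) atTop (nhds 0) := by
  have hs : Summable (fun j => ‖(⟪e j, x⟫ : ℂ)‖ ^ 2) :=
    e.orthonormal.inner_products_summable x
  have h0 := hs.tendsto_atTop_zero
  rw [tendsto_zero_iff_norm_tendsto_zero]
  have h1 : Tendsto (fun j => Real.sqrt (‖(⟪e j, x⟫ : ℂ)‖ ^ 2)) atTop (nhds 0) := by
    have := (Real.continuous_sqrt.tendsto 0).comp h0
    simpa [Function.comp_def] using this
  have h2 : (fun j => Real.sqrt (‖(⟪e j, x⟫ : ℂ)‖ ^ 2)) = fun j => ‖(⟪e j, x⟫ : ℂ)‖ :=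
    funext fun j => Real.sqrt_sq (norm_nonneg _)
  rw [h2] at h1
  exact h1

lemma aux_coeff_tendsto' (e : HilbertBasis ℕ ℂ H) (x : H) :
    Tendsto (fun j => (⟪x, e j⟫ : ℂ)) atTop (nhds 0) := by
  have h := (continuous_star.tendsto (0 : ℂ)).comp (aux_coeff_tendsto e x)
  rw [star_zero] at h
  exact Tendsto.congr (fun j => by simp [Function.comp_def]) h

/-- a compact operator sends bounded weakly-null sequences to null sequences -/
lemma aux_compact_weak_null (K : H →L[ℂ] H) (hK : IsCompactOperator K)
    (x : ℕ → H) (C : ℝ) (hb : ∀ n, ‖x n‖ ≤ C)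
    (hw : ∀ y : H, Tendsto (fun n => (⟪y, x n⟫ : ℂ)) atTop (nhds 0)) :
    Tendsto (fun n => K (x n)) atTop (nhds 0) := by
  obtain ⟨M, hMc, hMs⟩ :=
    (hK : IsCompactOperator (K : H →ₗ[ℂ] H)).image_closedBall_subset_compact C
  have hmem : ∀ n, K (x n) ∈ M := fun n =>
    hMs ⟨x n, mem_closedBall_zero_iff.2 (hb n), rfl⟩
  refine tendsto_of_subseq_tendsto fun ns hns => ?_
  obtain ⟨a, -, φ, hφ, hconv⟩ := hMc.tendsto_subseq (x := fun n => K (x (ns n)))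
    (fun n => hmem (ns n))
  have ha : a = 0 := by
    refine ext_inner_left ℂ fun y => ?_
    have h1 : Tendsto (fun m => (⟪y, K (x (ns (φ m)))⟫ : ℂ)) atTop (nhds ⟪y, a⟫) :=
      Filter.Tendsto.inner tendsto_const_nhds hconv
    have h2 : Tendsto (fun m => (⟪y, K (x (ns (φ m)))⟫ : ℂ)) atTop (nhds 0) := by
      have := (hw (ContinuousLinearMap.adjoint K y)).comp (hns.comp hφ.tendsto_atTop)
      simpa [Function.comp_def, ContinuousLinearMap.adjoint_inner_left] using this
    simp [tendsto_nhds_unique h1 h2]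
  exact ⟨φ, by simpa [Function.comp_def, ha] using hconv⟩

lemma aux_norm_sub_proj_le {ι : Type*} {v : ι → H} (hv : Orthonormal ℂ v)
    (s : Finset ι) (y : H) :
    ‖y - ∑ i ∈ s, (⟪v i, y⟫ : ℂ) • v i‖ ≤ ‖y‖ := by
  set P := ∑ i ∈ s, (⟪v i, y⟫ : ℂ) • v i with hP
  have horth : (⟪P, y - P⟫ : ℂ) = 0 := by
    have h1 : (⟪P, y⟫ : ℂ) = ∑ i ∈ s, (starRingEnd ℂ) ⟪v i, y⟫ * ⟪v i, y⟫ := by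
      simp [hP, sum_inner, inner_smul_left]
      exact Finset.sum_congr rfl fun _ _ => mul_comm _ _
    have h2 : (⟪P, P⟫ : ℂ) = ∑ i ∈ s, (starRingEnd ℂ) ⟪v i, y⟫ * ⟪v i, y⟫ :=
      hv.inner_sum _ _ s
    rw [inner_sub_right, h1, h2, sub_self]
  have hpyth : ‖y‖ ^ 2 = ‖P‖ ^ 2 + ‖y - P‖ ^ 2 := by
    have := norm_add_sq (𝕜 := ℂ) P (y - P)
    simpa [horth, add_sub_cancel] using this
  have : ‖y - P‖ ^ 2 ≤ ‖y‖ ^ 2 := by nlinarith [sq_nonneg ‖P‖]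
  exact le_of_pow_le_pow_left₀ two_ne_zero (norm_nonneg _) this

lemma aux_norm_proj_sq {ι : Type*} {v : ι → H} (hv : Orthonormal ℂ v)
    (s : Finset ι) (y : H) :
    ‖∑ i ∈ s, (⟪v i, y⟫ : ℂ) • v i‖ ^ 2 = ∑ i ∈ s, ‖(⟪v i, y⟫ : ℂ)‖ ^ 2 := by
  have h := hv.inner_sum (fun i => (⟪v i, y⟫ : ℂ)) (fun i => (⟪v i, y⟫ : ℂ)) s
  have h2 : (‖∑ i ∈ s, (⟪v i, y⟫ : ℂ) • v i‖ : ℝ) ^ 2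
      = RCLike.re (⟪∑ i ∈ s, (⟪v i, y⟫ : ℂ) • v i, ∑ i ∈ s, (⟪v i, y⟫ : ℂ) • v i⟫ : ℂ) :=
    norm_sq_eq_re_inner (𝕜 := ℂ) _
  rw [h2, h, map_sum]
  refine Finset.sum_congr rfl fun i _ => ?_
  rw [RCLike.conj_mul]
  simp [← Complex.ofReal_pow]

end Aux

/-- any sparse sequence of coordinate projections is a sparse
Følner sequence for every compact operator. -/
theorem stmt_1
    {H : Type*} [NormedAddCommGroup H] [InnerProductSpace ℂ H] [CompleteSpace H]
    (e : HilbertBasis ℕ ℂ H)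
    (K : H →L[ℂ] H) (hK : IsCompactOperator K)
    (k : ℕ → ℕ) (hk : StrictMono k)
    (R : ℕ → H → H)
    (hR : ∀ n x, R n x = ∑ i ∈ Finset.range n, ((inner ℂ (e (k i)) x : ℂ) • e (k i))) :
    Filter.Tendsto
      (fun n => hsNormOn e (fun x => K (R n x) - R n (K x)) / Real.sqrt n)
      Filter.atTop (nhds 0) := by
  classical
  set Kd := ContinuousLinearMap.adjoint K with hKd
  have hketendsto : Filter.Tendsto k atTop atTop := hk.tendsto_atTop
  have h1 : Tendsto (fun i => K (e (k i))) atTop (nhds 0) := by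
    refine aux_compact_weak_null K hK _ 1 (fun i => le_of_eq (e.orthonormal.1 (k i))) fun y => ?_
    exact (aux_coeff_tendsto' e y).comp hketendsto
  have h2 : Tendsto (fun i => ‖Kd (e (k i))‖ ^ 2) atTop (nhds 0) := by
    have hx : Tendsto (fun i => K (Kd (e (k i)))) atTop (nhds 0) := by
      refine aux_compact_weak_null K hK _ ‖Kd‖ (fun i => ?_) fun y => ?_
      · calc ‖Kd (e (k i))‖ ≤ ‖Kd‖ * ‖e (k i)‖ := Kd.le_opNorm _
          _ = ‖Kd‖ := by rw [e.orthonormal.1, mul_one]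
      · have h5 := (aux_coeff_tendsto' e (K y)).comp hketendsto
        refine Tendsto.congr (fun i => ?_) h5
        simp [Function.comp_def, hKd, ContinuousLinearMap.adjoint_inner_right]
    have hb : ∀ i, ‖Kd (e (k i))‖ ^ 2 ≤ ‖K (Kd (e (k i)))‖ := by
      intro i
      have h3 : (‖Kd (e (k i))‖ : ℝ) ^ 2
          = RCLike.re ((inner ℂ (Kd (e (k i))) (Kd (e (k i)))) : ℂ) := norm_sq_eq_re_inner (𝕜 := ℂ) _
      have h4 : ((inner ℂ (Kd (e (k i))) (Kd (e (k i)))) : ℂ)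
          = inner ℂ (e (k i)) (K (Kd (e (k i)))) :=
        ContinuousLinearMap.adjoint_inner_left K _ _
      calc ‖Kd (e (k i))‖ ^ 2
          = RCLike.re ((inner ℂ (e (k i)) (K (Kd (e (k i))))) : ℂ) := by rw [h3, h4]
        _ ≤ ‖((inner ℂ (e (k i)) (K (Kd (e (k i))))) : ℂ)‖ := RCLike.re_le_norm _
        _ ≤ ‖e (k i)‖ * ‖K (Kd (e (k i)))‖ := norm_inner_le_norm _ _
        _ = ‖K (Kd (e (k i)))‖ := by rw [e.orthonormal.1, one_mul]
    have hxnorm : Tendsto (fun i => ‖K (Kd (e (k i)))‖) atTop (nhds 0) := by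
      simpa using hx.norm
    exact squeeze_zero (fun i => sq_nonneg _) hb hxnorm
  have h0 : Tendsto (fun i => ‖K (e (k i))‖ ^ 2 + ‖Kd (e (k i))‖ ^ 2) atTop (nhds 0) := by
    have h1' : Tendsto (fun i => ‖K (e (k i))‖ ^ 2) atTop (nhds 0) := by
      have := (h1.norm).pow 2
      simpa using this
    simpa using h1'.add h2
  have hces : Tendsto
      (fun n => (∑ i ∈ Finset.range n, (‖K (e (k i))‖ ^ 2 + ‖Kd (e (k i))‖ ^ 2)) / (n : ℝ))
      atTop (nhds 0) := by
    simpa [div_eq_mul_inv, mul_comm] using h0.cesaro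
  set f : ℕ → ℕ → ℝ := fun n j => ‖K (R n (e j)) - R n (K (e j))‖ ^ 2 with hf
  have key : ∀ n, Summable (f n) ∧
      (∑' j, f n j) ≤ ∑ i ∈ Finset.range n, (‖K (e (k i))‖ ^ 2 + ‖Kd (e (k i))‖ ^ 2) := by
    intro n
    set s : Finset ℕ := (Finset.range n).image k with hs
    have honk : Orthonormal ℂ (fun i => e (k i)) := e.orthonormal.comp k hk.injective
    have hinner : ∀ a b : ℕ, ((inner ℂ (e a) (e b)) : ℂ) = if a = b then 1 else 0 := fun a b =>
      orthonormal_iff_ite.mp e.orthonormal a b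
    have hRe_mem : ∀ j ∈ s, R n (e j) = e j := by
      intro j hj
      obtain ⟨i₀, hi₀, rfl⟩ := Finset.mem_image.mp hj
      rw [hR, Finset.sum_eq_single_of_mem i₀ hi₀]
      · rw [hinner, if_pos rfl, one_smul]
      · intro i hi hne
        rw [hinner, if_neg (fun hc => hne (hk.injective hc)), zero_smul]
    have hRe_not : ∀ j ∉ s, R n (e j) = 0 := by
      intro j hj
      rw [hR]
      refine Finset.sum_eq_zero fun i hi => ?_
      have hne : k i ≠ j := fun hc => hj (Finset.mem_image.mpr ⟨i, hi, hc⟩)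
      rw [hinner, if_neg hne, zero_smul]
    set g : ℕ → ℝ := fun j => (if j ∈ s then ‖K (e j)‖ ^ 2 else 0)
        + ∑ i ∈ Finset.range n, ‖((inner ℂ (e j) (Kd (e (k i)))) : ℂ)‖ ^ 2 with hg
    have hfg : ∀ j, f n j ≤ g j := by
      intro j
      by_cases hj : j ∈ s
      · have hb : ‖K (e j) - R n (K (e j))‖ ≤ ‖K (e j)‖ := by
          rw [hR]
          exact aux_norm_sub_proj_le honk (Finset.range n) (K (e j))
        have hle : f n j ≤ ‖K (e j)‖ ^ 2 := by
          rw [hf]; dsimp only; rw [hRe_mem j hj]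
          exact pow_le_pow_left₀ (norm_nonneg _) hb 2
        refine hle.trans ?_
        rw [hg]; dsimp only; rw [if_pos hj]
        exact le_add_of_nonneg_right (Finset.sum_nonneg fun i _ => sq_nonneg _)
      · have hval : f n j = ∑ i ∈ Finset.range n, ‖((inner ℂ (e (k i)) (K (e j))) : ℂ)‖ ^ 2 := by
          rw [hf]; dsimp only
          rw [hRe_not j hj, map_zero, zero_sub, norm_neg, hR]
          exact aux_norm_proj_sq honk (Finset.range n) (K (e j))
        rw [hval, hg]; dsimp only; rw [if_neg hj, zero_add]
        refine le_of_eq (Finset.sum_congr rfl fun i _ => ?_)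
        rw [← ContinuousLinearMap.adjoint_inner_left K (e j) (e (k i)), ← hKd,
          norm_inner_symm]
    have hsum1 : Summable (fun j => if j ∈ s then ‖K (e j)‖ ^ 2 else (0:ℝ)) :=
      summable_of_ne_finset_zero (s := s) fun j hj => if_neg hj
    have hsum2 : Summable (fun j => ∑ i ∈ Finset.range n,
        ‖((inner ℂ (e j) (Kd (e (k i)))) : ℂ)‖ ^ 2) :=
      summable_sum fun i _ => e.orthonormal.inner_products_summable (Kd (e (k i)))
    have hgsum : Summable g := hsum1.add hsum2
    have hfsum : Summable (f n) := hgsum.of_nonneg_of_le (fun j => sq_nonneg _) hfg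
    refine ⟨hfsum, ?_⟩
    have ht1 : (∑' j, f n j) ≤ ∑' j, g j := Summable.tsum_le_tsum hfg hfsum hgsum
    have ht2 : (∑' j, g j) = (∑ j ∈ s, ‖K (e j)‖ ^ 2)
        + ∑ i ∈ Finset.range n, ∑' j, ‖((inner ℂ (e j) (Kd (e (k i)))) : ℂ)‖ ^ 2 := by
      rw [hg, Summable.tsum_add hsum1 hsum2]
      congr 1
      · rw [tsum_eq_sum (s := s) (fun j hj => if_neg hj)]
        exact Finset.sum_congr rfl fun j hj => if_pos hj
      · exact Summable.tsum_finsetSum fun i _ => e.orthonormal.inner_products_summable (Kd (e (k i)))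
    have ht3 : (∑ j ∈ s, ‖K (e j)‖ ^ 2) = ∑ i ∈ Finset.range n, ‖K (e (k i))‖ ^ 2 := by
      rw [hs]
      exact Finset.sum_image fun a _ b _ hab => hk.injective hab
    have ht4 : ∀ i, (∑' j, ‖((inner ℂ (e j) (Kd (e (k i)))) : ℂ)‖ ^ 2) ≤ ‖Kd (e (k i))‖ ^ 2 :=
      fun i => e.orthonormal.tsum_inner_products_le (Kd (e (k i)))
    calc (∑' j, f n j) ≤ ∑' j, g j := ht1
      _ = _ := ht2
      _ ≤ (∑ i ∈ Finset.range n, ‖K (e (k i))‖ ^ 2)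
          + ∑ i ∈ Finset.range n, ‖Kd (e (k i))‖ ^ 2 := by
          rw [ht3]
          exact add_le_add_right (Finset.sum_le_sum fun i _ => ht4 i) _
      _ = _ := by rw [← Finset.sum_add_distrib]
  have hdiv : Tendsto (fun n => (∑' j, f n j) / (n : ℝ)) atTop (nhds 0) := by
    refine squeeze_zero (fun n => div_nonneg (tsum_nonneg fun j => sq_nonneg _)
      (Nat.cast_nonneg n)) (fun n => ?_) hces
    rw [div_eq_mul_inv, div_eq_mul_inv]
    exact mul_le_mul_of_nonneg_right (key n).2 (inv_nonneg.mpr (Nat.cast_nonneg n))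
  have hsq := (Real.continuous_sqrt.tendsto 0).comp hdiv
  rw [Real.sqrt_zero] at hsq
  refine Tendsto.congr (fun n => ?_) hsq
  show Real.sqrt ((∑' j, f n j) / (n : ℝ))
      = hsNormOn e (fun x => K (R n x) - R n (K x)) / Real.sqrt n
  rw [Real.sqrt_div (tsum_nonneg fun j => sq_nonneg _)]
  simp only [hsNormOn]
end

section
/- Let S_w be the weighted unilateral shift on ℓ²(ℕ) with weights w_n = log n and domain c₀₀, and P_n the canonical projections. Then lim_{n→∞} ‖[S_w, P_n]‖_{2,B}/‖P_n‖₂ = 0, where ‖[S_w,P_n]‖_{2,B} = √(∑_k ‖[S_w,P_n] e_k‖²) = log n and ‖P_n‖₂ = √n; i.e., {P_n} is a 2-Følner sequence for S_w, but ‖[S_w,P_n]‖_u = log n → ∞ so {P_n} is not quasidiagonalizing. -/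
open Filter

/-- for the weighted shift with logarithmic weights
(`S e_k = log(k+1) • e (k+1)`, i.e. weights `w_n = log n` in 1-based indexing),
the canonical projections form a 2-Følner sequence
(`‖[S,P_n]‖_{2,B}/‖P_n‖₂ = log n/√n → 0`) but are not quasidiagonalizing
(`‖[S,P_n]‖_u = log n → ∞`). -/
theorem stmt_9
    {H : Type*} [NormedAddCommGroup H] [InnerProductSpace ℂ H] [CompleteSpace H]
    (e : HilbertBasis ℕ ℂ H)
    (S : H →ₗ.[ℂ] H)
    (hdom : S.domain = Submodule.span ℂ (Set.range ⇑e))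
    (hedom : ∀ k, (e k : H) ∈ S.domain)
    (hS : ∀ k, S ⟨e k, hedom k⟩ = ((Real.log (k + 1) : ℝ) : ℂ) • e (k + 1))
    (P : ℕ → H →L[ℂ] H)
    (hP : ∀ n x, P n x = ∑ i ∈ Finset.range n, ((inner ℂ (e i) x : ℂ) • e i))
    (hPmem : ∀ n x, P n x ∈ S.domain) :
    (∀ n : ℕ,
      Real.sqrt (∑' k, ‖S ⟨P (n + 1) (e k), hPmem (n + 1) (e k)⟩
          - P (n + 1) (S ⟨e k, hedom k⟩)‖ ^ 2) = Real.log (n + 1)) ∧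
    Filter.Tendsto (fun n : ℕ =>
        Real.sqrt (∑' k, ‖S ⟨P n (e k), hPmem n (e k)⟩
          - P n (S ⟨e k, hedom k⟩)‖ ^ 2) / Real.sqrt n)
      Filter.atTop (nhds 0) ∧
    (∀ n : ℕ,
      (⨆ ψ : {x : H // x ∈ S.domain ∧ ‖x‖ ≤ 1},
        ‖S ⟨P (n + 1) ψ.1, hPmem (n + 1) ψ.1⟩ - P (n + 1) (S ⟨ψ.1, ψ.2.1⟩)‖)
          = Real.log (n + 1)) ∧
    Filter.Tendsto (fun n : ℕ =>
        ⨆ ψ : {x : H // x ∈ S.domain ∧ ‖x‖ ≤ 1},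
          ‖S ⟨P n ψ.1, hPmem n ψ.1⟩ - P n (S ⟨ψ.1, ψ.2.1⟩)‖)
      Filter.atTop Filter.atTop := by
  have hon := orthonormal_iff_ite.mp e.orthonormal
  have hPe : ∀ n k, P n (e k) = if k < n then (e k : H) else 0 := by
    intro n k
    rw [hP]
    simp only [hon, ite_smul, one_smul, zero_smul]
    rw [Finset.sum_ite_eq' (Finset.range n) k (fun i => (e i : H))]
    simp
  have key : ∀ (n : ℕ) (x : H), x ∈ Submodule.span ℂ (Set.range ⇑e) →
      ∀ hx : x ∈ S.domain,
      S ⟨P n x, hPmem n x⟩ - P n (S ⟨x, hx⟩)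
        = ((Real.log n : ℝ) : ℂ) • ((inner ℂ (e (n-1)) x : ℂ) • e n) := by
    intro n x hxs
    induction hxs using Submodule.span_induction with
    | mem x hmem =>
      obtain ⟨k, rfl⟩ := hmem
      intro hx
      have h1 : S ⟨P n (e k), hPmem n (e k)⟩
          = if k < n then ((Real.log (k+1) : ℝ) : ℂ) • (e (k+1) : H) else 0 := by
        by_cases hk : k < n
        · have hq : (⟨P n (e k), hPmem n (e k)⟩ : S.domain) = ⟨e k, hedom k⟩ :=
            Subtype.ext ((hPe n k).trans (if_pos hk))
          rw [hq, hS k]; simp [hk]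
        · have hq : (⟨P n (e k), hPmem n (e k)⟩ : S.domain) = 0 :=
            Subtype.ext ((hPe n k).trans (if_neg hk))
          rw [hq, S.map_zero]; simp [hk]
      have h2 : P n (S ⟨e k, hx⟩)
          = ((Real.log (k+1) : ℝ) : ℂ) • (if k + 1 < n then (e (k+1) : H) else 0) := by
        have hq : (⟨e k, hx⟩ : S.domain) = ⟨e k, hedom k⟩ := rfl
        rw [hq, hS k, map_smul, hPe]
      rw [h1, h2, hon]
      rcases lt_trichotomy (k+1) n with h | h | h
      · have hk : k < n := by omega
        have hne : ¬ (n - 1 = k) := by omega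
        simp [hk, h, hne]
      · have hk : k < n := by omega
        have heq : n - 1 = k := by omega
        have hn : n = k + 1 := by omega
        simp [hk, heq, hn, smul_smul]
      · have hk : ¬ (k < n) := by omega
        have hk2 : ¬ (k + 1 < n) := by omega
        by_cases hn : n = 0
        · subst hn; simp [hk, hk2, Real.log_zero]
        · have hne : ¬ (n - 1 = k) := by omega
          simp [hk, hk2, hne]
    | zero =>
      intro h0
      have hq : (⟨P n (0:H), hPmem n 0⟩ : S.domain) = 0 := Subtype.ext (by simp)
      have hq0 : (⟨(0:H), h0⟩ : S.domain) = 0 := rfl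
      rw [hq, hq0, S.map_zero]; simp
    | add x y hxs hys ihx ihy =>
      intro hxy
      have hx : x ∈ S.domain := hdom ▸ hxs
      have hy : y ∈ S.domain := hdom ▸ hys
      have hq : (⟨P n (x + y), hPmem n (x+y)⟩ : S.domain)
          = ⟨P n x, hPmem n x⟩ + ⟨P n y, hPmem n y⟩ := Subtype.ext (by simp)
      have hq2 : (⟨x + y, hxy⟩ : S.domain) = ⟨x, hx⟩ + ⟨y, hy⟩ := rfl
      rw [hq, hq2, S.map_add, S.map_add, map_add]
      calc S ⟨P n x, hPmem n x⟩ + S ⟨P n y, hPmem n y⟩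
          - (P n (S ⟨x, hx⟩) + P n (S ⟨y, hy⟩))
          = (S ⟨P n x, hPmem n x⟩ - P n (S ⟨x, hx⟩))
            + (S ⟨P n y, hPmem n y⟩ - P n (S ⟨y, hy⟩)) := by abel
        _ = _ := by rw [ihx hx, ihy hy, inner_add_right, add_smul, smul_add]
    | smul a x hxs ihx =>
      intro hax
      have hx : x ∈ S.domain := hdom ▸ hxs
      have hq : (⟨P n (a • x), hPmem n (a • x)⟩ : S.domain)
          = a • ⟨P n x, hPmem n x⟩ := Subtype.ext (by simp)
      have hq2 : (⟨a • x, hax⟩ : S.domain) = a • ⟨x, hx⟩ := rfl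
      rw [hq, hq2, S.map_smul, S.map_smul, map_smul, inner_smul_right,
        ← smul_sub, ihx hx, smul_smul, smul_smul, smul_smul]
      ring_nf
  have hone : ∀ k, ‖(e k : H)‖ = 1 := e.orthonormal.1
  have hmemspan : ∀ x, x ∈ S.domain → x ∈ Submodule.span ℂ (Set.range ⇑e) := by
    rw [hdom]; exact fun x hx => hx
  -- norm of the commutator applied to a domain vector
  have hCnorm : ∀ (n : ℕ) (x : H) (hx : x ∈ S.domain),
      ‖S ⟨P n x, hPmem n x⟩ - P n (S ⟨x, hx⟩)‖
        = Real.log n * ‖(inner ℂ (e (n-1)) x : ℂ)‖ := by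
    intro n x hx
    rw [key n x (hmemspan x hx) hx, norm_smul, norm_smul, hone, mul_one,
      Complex.norm_real, Real.norm_eq_abs, abs_of_nonneg (Real.log_natCast_nonneg n)]
  -- the ℓ² sum of the commutator over the basis
  have htsum : ∀ n : ℕ,
      (∑' k, ‖S ⟨P n (e k), hPmem n (e k)⟩ - P n (S ⟨e k, hedom k⟩)‖ ^ 2)
        = (Real.log n) ^ 2 := by
    intro n
    rw [tsum_eq_single (n - 1) (by
      intro k hk
      rw [hCnorm n (e k) (hedom k), hon]
      simp [Ne.symm hk])]
    rw [hCnorm n (e (n-1)) (hedom (n-1)), hon]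
    simp
  have hsqrt : ∀ n : ℕ,
      Real.sqrt (∑' k, ‖S ⟨P n (e k), hPmem n (e k)⟩ - P n (S ⟨e k, hedom k⟩)‖ ^ 2)
        = Real.log n := by
    intro n
    rw [htsum n, Real.sqrt_sq (Real.log_natCast_nonneg n)]
  haveI : Nonempty {x : H // x ∈ S.domain ∧ ‖x‖ ≤ 1} :=
    ⟨⟨0, S.domain.zero_mem, by simp⟩⟩
  have hbound : ∀ (n : ℕ) (ψ : {x : H // x ∈ S.domain ∧ ‖x‖ ≤ 1}),
      ‖S ⟨P n ψ.1, hPmem n ψ.1⟩ - P n (S ⟨ψ.1, ψ.2.1⟩)‖ ≤ Real.log n := by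
    intro n ψ
    rw [hCnorm n ψ.1 ψ.2.1]
    calc Real.log n * ‖(inner ℂ (e (n-1)) ψ.1 : ℂ)‖
        ≤ Real.log n * 1 := by
          apply mul_le_mul_of_nonneg_left _ (Real.log_natCast_nonneg n)
          calc ‖(inner ℂ (e (n-1)) ψ.1 : ℂ)‖ ≤ ‖(e (n-1) : H)‖ * ‖ψ.1‖ :=
                norm_inner_le_norm _ _
            _ ≤ 1 := by rw [hone, one_mul]; exact ψ.2.2
      _ = Real.log n := mul_one _
  have hsup : ∀ n : ℕ,
      (⨆ ψ : {x : H // x ∈ S.domain ∧ ‖x‖ ≤ 1},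
        ‖S ⟨P n ψ.1, hPmem n ψ.1⟩ - P n (S ⟨ψ.1, ψ.2.1⟩)‖) = Real.log n := by
    intro n
    apply le_antisymm (ciSup_le (hbound n))
    have hach : ‖S ⟨P n (e (n-1)), hPmem n (e (n-1))⟩
        - P n (S ⟨e (n-1), hedom (n-1)⟩)‖ = Real.log n := by
      rw [hCnorm n (e (n-1)) (hedom (n-1)), hon]
      simp
    calc Real.log n
        = ‖S ⟨P n (e (n-1)), hPmem n (e (n-1))⟩
            - P n (S ⟨e (n-1), hedom (n-1)⟩)‖ := hach.symm
      _ ≤ _ := le_ciSup (f := fun ψ : {x : H // x ∈ S.domain ∧ ‖x‖ ≤ 1} =>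
            ‖S ⟨P n ψ.1, hPmem n ψ.1⟩ - P n (S ⟨ψ.1, ψ.2.1⟩)‖)
            ⟨Real.log n, by rintro v ⟨ψ, rfl⟩; exact hbound n ψ⟩
            ⟨e (n-1), hedom (n-1), le_of_eq (hone (n-1))⟩
  refine ⟨?_, ?_, ?_, ?_⟩
  · intro n
    rw [hsqrt (n+1)]
    norm_cast
  · have heq : (fun n : ℕ =>
        Real.sqrt (∑' k, ‖S ⟨P n (e k), hPmem n (e k)⟩
          - P n (S ⟨e k, hedom k⟩)‖ ^ 2) / Real.sqrt n)
        = fun n : ℕ => Real.log n / Real.sqrt n := funext fun n => by rw [hsqrt n]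
    rw [heq]
    have h0 : Tendsto (fun x : ℝ => Real.log x / x ^ (1/2 : ℝ)) atTop (nhds 0) :=
      (isLittleO_log_rpow_atTop one_half_pos).tendsto_div_nhds_zero
    exact (h0.comp tendsto_natCast_atTop_atTop).congr
      (fun n => by rw [Function.comp_apply, Real.sqrt_eq_rpow])
  · intro n
    rw [hsup (n+1)]
    norm_cast
  · have heq : (fun n : ℕ =>
        ⨆ ψ : {x : H // x ∈ S.domain ∧ ‖x‖ ≤ 1},
          ‖S ⟨P n ψ.1, hPmem n ψ.1⟩ - P n (S ⟨ψ.1, ψ.2.1⟩)‖)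
        = fun n : ℕ => Real.log n := funext hsup
    rw [heq]
    exact Real.tendsto_log_atTop.comp tendsto_natCast_atTop_atTop
end

section
/- Let A be the operator on ℓ²(ℕ) with domain c₀₀ defined by A e_{2j−1} = (2j−1)² e_{2j−1} + (1/(2j−1)) e_{2j} and A e_{2j} = (2j)² e_{2j}. Let P_n be the canonical projections. Then ‖[A, P_{2j−1}]‖_u = 1/(2j−1) → 0 and ‖[A, P_{2j}]‖_u = 0, so {P_n} is quasidiagonalizing for A; however ‖[A², P_{2j−1}]‖_u = ((2j−1)² + (2j)²)/(2j−1) → ∞, so {P_n} is not quasidiagonalizing for A² (with domain c₀₀). -/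
open Filter

/-- the operator `A` on `ℓ²` with `A e_{2m} = (2m+1)² e_{2m} +
(2m+1)⁻¹ e_{2m+1}` and `A e_{2m+1} = (2m+2)² e_{2m+1}` (0-based indexing of the
1-based statement) is quasidiagonalized by the canonical projections, but its
square `A²` (same domain `c₀₀`) is not. -/
theorem stmt_14
    {H : Type*} [NormedAddCommGroup H] [InnerProductSpace ℂ H] [CompleteSpace H]
    (e : HilbertBasis ℕ ℂ H)
    (A A2 : H →ₗ.[ℂ] H)
    (hdom : A.domain = Submodule.span ℂ (Set.range ⇑e))
    (hdom2 : A2.domain = A.domain)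
    (hedom : ∀ k, (e k : H) ∈ A.domain)
    (hedom2 : ∀ k, (e k : H) ∈ A2.domain)
    (hAodd : ∀ m : ℕ, A ⟨e (2 * m), hedom (2 * m)⟩
      = (((2 * m + 1 : ℕ) : ℂ) ^ 2) • e (2 * m)
        + (((2 * m + 1 : ℕ) : ℂ))⁻¹ • e (2 * m + 1))
    (hAeven : ∀ m : ℕ, A ⟨e (2 * m + 1), hedom (2 * m + 1)⟩
      = (((2 * m + 2 : ℕ) : ℂ) ^ 2) • e (2 * m + 1))
    (hrange : ∀ ψ : A.domain, A ψ ∈ A.domain)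
    (hA2 : ∀ (ψ : A.domain) (h : (ψ : H) ∈ A2.domain),
      A2 ⟨(ψ : H), h⟩ = A ⟨A ψ, hrange ψ⟩)
    (P : ℕ → H →L[ℂ] H)
    (hP : ∀ n x, P n x = ∑ i ∈ Finset.range n, ((inner ℂ (e i) x : ℂ) • e i))
    (hPmem : ∀ n x, P n x ∈ A.domain)
    (hPmem2 : ∀ n x, P n x ∈ A2.domain) :
    (∀ m : ℕ,
      (⨆ ψ : {x : H // x ∈ A.domain ∧ ‖x‖ ≤ 1},
        ‖A ⟨P (2 * m + 1) ψ.1, hPmem (2 * m + 1) ψ.1⟩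
          - P (2 * m + 1) (A ⟨ψ.1, ψ.2.1⟩)‖)
        = ((2 * m + 1 : ℝ))⁻¹) ∧
    (∀ m : ℕ,
      (⨆ ψ : {x : H // x ∈ A.domain ∧ ‖x‖ ≤ 1},
        ‖A ⟨P (2 * m + 2) ψ.1, hPmem (2 * m + 2) ψ.1⟩
          - P (2 * m + 2) (A ⟨ψ.1, ψ.2.1⟩)‖) = 0) ∧
    Filter.Tendsto (fun n : ℕ =>
        ⨆ ψ : {x : H // x ∈ A.domain ∧ ‖x‖ ≤ 1},
          ‖A ⟨P n ψ.1, hPmem n ψ.1⟩ - P n (A ⟨ψ.1, ψ.2.1⟩)‖)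
      Filter.atTop (nhds 0) ∧
    (∀ m : ℕ,
      (⨆ ψ : {x : H // x ∈ A2.domain ∧ ‖x‖ ≤ 1},
        ‖A2 ⟨P (2 * m + 1) ψ.1, hPmem2 (2 * m + 1) ψ.1⟩
          - P (2 * m + 1) (A2 ⟨ψ.1, ψ.2.1⟩)‖)
        = ((2 * m + 1 : ℝ) ^ 2 + (2 * m + 2 : ℝ) ^ 2) / (2 * m + 1 : ℝ)) ∧
    Filter.Tendsto (fun m : ℕ =>
        ⨆ ψ : {x : H // x ∈ A2.domain ∧ ‖x‖ ≤ 1},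
          ‖A2 ⟨P (2 * m + 1) ψ.1, hPmem2 (2 * m + 1) ψ.1⟩
            - P (2 * m + 1) (A2 ⟨ψ.1, ψ.2.1⟩)‖)
      Filter.atTop Filter.atTop := by
  classical
  have horth : ∀ i j : ℕ, (inner ℂ (e i) (e j) : ℂ) = if i = j then 1 else 0 :=
    orthonormal_iff_ite.mp e.orthonormal
  have hPe : ∀ n k, P n (e k) = if k < n then (e k : H) else 0 := by
    intro n k
    rw [hP]
    simp only [horth, ite_smul, one_smul, zero_smul, Finset.sum_ite_eq',
      Finset.mem_range]
  have keyOdd : ∀ (m : ℕ) (x : H) (hx : x ∈ A.domain),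
      A ⟨P (2*m+1) x, hPmem (2*m+1) x⟩ - P (2*m+1) (A ⟨x, hx⟩)
        = (((2*m+1 : ℕ) : ℂ))⁻¹ • (inner ℂ (e (2*m)) x : ℂ) • e (2*m+1) := by
    intro m x hx
    have hx' : x ∈ Submodule.span ℂ (Set.range ⇑e) := hdom ▸ hx
    revert hx
    refine Submodule.span_induction (p := fun y _ => ∀ hy : y ∈ A.domain,
      A ⟨P (2*m+1) y, hPmem (2*m+1) y⟩ - P (2*m+1) (A ⟨y, hy⟩)
        = (((2*m+1:ℕ):ℂ))⁻¹ • (inner ℂ (e (2*m)) y : ℂ) • e (2*m+1)) ?_ ?_ ?_ ?_ hx'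
    · rintro _ ⟨k, rfl⟩ hy
      obtain ⟨j, rfl | rfl⟩ : ∃ j, k = 2*j ∨ k = 2*j+1 := ⟨k/2, by omega⟩
      · have hAe : A ⟨e (2*j), hy⟩
            = (((2*j+1:ℕ):ℂ)^2) • e (2*j) + (((2*j+1:ℕ):ℂ))⁻¹ • e (2*j+1) := hAodd j
        by_cases hjm : 2*j < 2*m+1
        · have h1 : (⟨P (2*m+1) (e (2*j)), hPmem (2*m+1) (e (2*j))⟩ : A.domain)
              = ⟨e (2*j), hedom (2*j)⟩ := Subtype.ext
            (by show P (2*m+1) (e (2*j)) = (e (2*j) : H); rw [hPe, if_pos hjm])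
          rw [h1, hAodd j, map_add (P (2*m+1)), map_smul (P (2*m+1)), map_smul (P (2*m+1)), hPe, hPe, horth,
            if_pos hjm]
          by_cases h2 : 2*j+1 < 2*m+1
          · rw [if_pos h2, if_neg (by omega : ¬ 2*m = 2*j)]
            simp
          · have : j = m := by omega
            subst this
            rw [if_neg h2, if_pos rfl]
            simp
        · have h1 : (⟨P (2*m+1) (e (2*j)), hPmem (2*m+1) (e (2*j))⟩ : A.domain)
              = 0 := Subtype.ext
            (by show P (2*m+1) (e (2*j)) = (0:H); rw [hPe, if_neg hjm])
          rw [h1, A.map_zero, hAodd j, map_add, map_smul, map_smul, hPe, hPe,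
            if_neg hjm, if_neg (by omega : ¬ 2*j+1 < 2*m+1), horth,
            if_neg (by omega : ¬ 2*m = 2*j)]
          simp
      · have hAe : A ⟨e (2*j+1), hy⟩ = (((2*j+2:ℕ):ℂ)^2) • e (2*j+1) := hAeven j
        by_cases hjm : 2*j+1 < 2*m+1
        · have h1 : (⟨P (2*m+1) (e (2*j+1)), hPmem (2*m+1) (e (2*j+1))⟩ : A.domain)
              = ⟨e (2*j+1), hedom (2*j+1)⟩ := Subtype.ext
            (by show P (2*m+1) (e (2*j+1)) = (e (2*j+1) : H); rw [hPe, if_pos hjm])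
          rw [h1, hAeven j, map_smul, hPe, if_pos hjm, horth,
            if_neg (by omega : ¬ 2*m = 2*j+1)]
          simp
        · have h1 : (⟨P (2*m+1) (e (2*j+1)), hPmem (2*m+1) (e (2*j+1))⟩ : A.domain)
              = 0 := Subtype.ext
            (by show P (2*m+1) (e (2*j+1)) = (0:H); rw [hPe, if_neg hjm])
          rw [h1, A.map_zero, hAeven j, map_smul, hPe, if_neg hjm, horth,
            if_neg (by omega : ¬ 2*m = 2*j+1)]
          simp
    · intro hy
      have h1 : (⟨P (2*m+1) (0:H), hPmem (2*m+1) 0⟩ : A.domain) = 0 :=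
        Subtype.ext ((P (2*m+1)).map_zero)
      have h2 : (⟨(0:H), hy⟩ : A.domain) = 0 := Subtype.ext rfl
      rw [h1, h2, A.map_zero]
      simp
    · intro u v hu hv ihu ihv hy
      have hu' : u ∈ A.domain := hdom.symm ▸ hu
      have hv' : v ∈ A.domain := hdom.symm ▸ hv
      have h1 : (⟨P (2*m+1) (u+v), hPmem (2*m+1) (u+v)⟩ : A.domain)
          = ⟨P (2*m+1) u, hPmem (2*m+1) u⟩ + ⟨P (2*m+1) v, hPmem (2*m+1) v⟩ :=
        Subtype.ext (map_add (P (2*m+1)) u v)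
      have h2 : (⟨u+v, hy⟩ : A.domain) = ⟨u, hu'⟩ + ⟨v, hv'⟩ := Subtype.ext rfl
      rw [h1, h2, A.map_add, A.map_add, map_add (P (2*m+1)), inner_add_right,
        add_smul, smul_add, ← ihu hu', ← ihv hv']
      abel
    · intro a u hu ih hy
      have hu' : u ∈ A.domain := hdom.symm ▸ hu
      have h1 : (⟨P (2*m+1) (a•u), hPmem (2*m+1) (a•u)⟩ : A.domain)
          = a • ⟨P (2*m+1) u, hPmem (2*m+1) u⟩ :=
        Subtype.ext (map_smul (P (2*m+1)) a u)
      have h2 : (⟨a•u, hy⟩ : A.domain) = a • ⟨u, hu'⟩ := Subtype.ext rfl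
      rw [h1, h2, A.map_smul, A.map_smul, map_smul (P (2*m+1)), ← smul_sub,
        ih hu', inner_smul_right]
      simp only [smul_smul]
      congr 1
      ring

  have keyEven : ∀ (n : ℕ), n % 2 = 0 → ∀ (x : H) (hx : x ∈ A.domain),
      A ⟨P n x, hPmem n x⟩ - P n (A ⟨x, hx⟩) = 0 := by
    intro n hn x hx
    have hx' : x ∈ Submodule.span ℂ (Set.range ⇑e) := hdom ▸ hx
    revert hx
    refine Submodule.span_induction (p := fun y _ => ∀ hy : y ∈ A.domain,
      A ⟨P n y, hPmem n y⟩ - P n (A ⟨y, hy⟩) = 0) ?_ ?_ ?_ ?_ hx'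
    · rintro _ ⟨k, rfl⟩ hy
      obtain ⟨j, rfl | rfl⟩ : ∃ j, k = 2*j ∨ k = 2*j+1 := ⟨k/2, by omega⟩
      · by_cases hjn : 2*j < n
        · have h1 : (⟨P n (e (2*j)), hPmem n (e (2*j))⟩ : A.domain)
              = ⟨e (2*j), hedom (2*j)⟩ := Subtype.ext
            (by show P n (e (2*j)) = (e (2*j) : H); rw [hPe, if_pos hjn])
          rw [h1, hAodd j, map_add (P n), map_smul (P n), map_smul (P n), hPe, hPe,
            if_pos hjn, if_pos (by omega : 2*j+1 < n)]
          simp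
        · have h1 : (⟨P n (e (2*j)), hPmem n (e (2*j))⟩ : A.domain)
              = 0 := Subtype.ext
            (by show P n (e (2*j)) = (0:H); rw [hPe, if_neg hjn])
          rw [h1, A.map_zero, hAodd j, map_add, map_smul, map_smul, hPe, hPe,
            if_neg hjn, if_neg (by omega : ¬ 2*j+1 < n)]
          simp
      · by_cases hjn : 2*j+1 < n
        · have h1 : (⟨P n (e (2*j+1)), hPmem n (e (2*j+1))⟩ : A.domain)
              = ⟨e (2*j+1), hedom (2*j+1)⟩ := Subtype.ext
            (by show P n (e (2*j+1)) = (e (2*j+1) : H); rw [hPe, if_pos hjn])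
          rw [h1, hAeven j, map_smul, hPe, if_pos hjn]
          simp
        · have h1 : (⟨P n (e (2*j+1)), hPmem n (e (2*j+1))⟩ : A.domain)
              = 0 := Subtype.ext
            (by show P n (e (2*j+1)) = (0:H); rw [hPe, if_neg hjn])
          rw [h1, A.map_zero, hAeven j, map_smul, hPe, if_neg hjn]
          simp
    · intro hy
      have h1 : (⟨P n (0:H), hPmem n 0⟩ : A.domain) = 0 :=
        Subtype.ext ((P n).map_zero)
      have h2 : (⟨(0:H), hy⟩ : A.domain) = 0 := Subtype.ext rfl
      rw [h1, h2, A.map_zero]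
      simp
    · intro u v hu hv ihu ihv hy
      have hu' : u ∈ A.domain := hdom.symm ▸ hu
      have hv' : v ∈ A.domain := hdom.symm ▸ hv
      have h1 : (⟨P n (u+v), hPmem n (u+v)⟩ : A.domain)
          = ⟨P n u, hPmem n u⟩ + ⟨P n v, hPmem n v⟩ :=
        Subtype.ext (map_add (P n) u v)
      have h2 : (⟨u+v, hy⟩ : A.domain) = ⟨u, hu'⟩ + ⟨v, hv'⟩ := Subtype.ext rfl
      rw [h1, h2, A.map_add, A.map_add, map_add (P n), add_sub_add_comm,
        ihu hu', ihv hv', add_zero]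
    · intro a u hu ih hy
      have hu' : u ∈ A.domain := hdom.symm ▸ hu
      have h1 : (⟨P n (a•u), hPmem n (a•u)⟩ : A.domain)
          = a • ⟨P n u, hPmem n u⟩ := Subtype.ext (map_smul (P n) a u)
      have h2 : (⟨a•u, hy⟩ : A.domain) = a • ⟨u, hu'⟩ := Subtype.ext rfl
      rw [h1, h2, A.map_smul, A.map_smul, map_smul (P n), ← smul_sub,
        ih hu', smul_zero]
  have hinner : ∀ (m : ℕ) (x : H) (hx : x ∈ A.domain),
      (inner ℂ (e (2*m)) (A ⟨x, hx⟩) : ℂ)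
        = (((2*m+1:ℕ):ℂ))^2 * inner ℂ (e (2*m)) x := by
    intro m x hx
    have hx' : x ∈ Submodule.span ℂ (Set.range ⇑e) := hdom ▸ hx
    revert hx
    refine Submodule.span_induction (p := fun y _ => ∀ hy : y ∈ A.domain,
      (inner ℂ (e (2*m)) (A ⟨y, hy⟩) : ℂ)
        = (((2*m+1:ℕ):ℂ))^2 * inner ℂ (e (2*m)) y) ?_ ?_ ?_ ?_ hx'
    · rintro _ ⟨k, rfl⟩ hy
      obtain ⟨j, rfl | rfl⟩ : ∃ j, k = 2*j ∨ k = 2*j+1 := ⟨k/2, by omega⟩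
      · rw [hAodd j, inner_add_right, inner_smul_right, inner_smul_right,
          horth, horth]
        by_cases h : m = j
        · subst h
          rw [if_pos rfl, if_neg (by omega : ¬ 2*m = 2*m+1)]
          ring
        · rw [if_neg (by omega : ¬ 2*m = 2*j),
            if_neg (by omega : ¬ 2*m = 2*j+1)]
          ring
      · rw [hAeven j, inner_smul_right, horth,
          if_neg (by omega : ¬ 2*m = 2*j+1)]
        ring
    · intro hy
      have h2 : (⟨(0:H), hy⟩ : A.domain) = 0 := Subtype.ext rfl
      rw [h2, A.map_zero]
      simp
    · intro u v hu hv ihu ihv hy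
      have hu' : u ∈ A.domain := hdom.symm ▸ hu
      have hv' : v ∈ A.domain := hdom.symm ▸ hv
      have h2 : (⟨u+v, hy⟩ : A.domain) = ⟨u, hu'⟩ + ⟨v, hv'⟩ := Subtype.ext rfl
      rw [h2, A.map_add, inner_add_right, inner_add_right, ihu hu', ihv hv']
      ring
    · intro a u hu ih hy
      have hu' : u ∈ A.domain := hdom.symm ▸ hu
      have h2 : (⟨a•u, hy⟩ : A.domain) = a • ⟨u, hu'⟩ := Subtype.ext rfl
      rw [h2, A.map_smul, inner_smul_right, inner_smul_right, ih hu']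
      ring
  have keyOdd2 : ∀ (m : ℕ) (x : H) (hx2 : x ∈ A2.domain),
      A2 ⟨P (2*m+1) x, hPmem2 (2*m+1) x⟩ - P (2*m+1) (A2 ⟨x, hx2⟩)
        = ((((2*m+1:ℕ):ℂ)^2 + ((2*m+2:ℕ):ℂ)^2) / ((2*m+1:ℕ):ℂ)) •
            (inner ℂ (e (2*m)) x : ℂ) • e (2*m+1) := by
    intro m x hx2
    have hx : x ∈ A.domain := hdom2 ▸ hx2
    have h1 : A2 ⟨P (2*m+1) x, hPmem2 (2*m+1) x⟩
        = A ⟨A ⟨P (2*m+1) x, hPmem (2*m+1) x⟩, hrange ⟨P (2*m+1) x, hPmem (2*m+1) x⟩⟩ :=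
      hA2 ⟨P (2*m+1) x, hPmem (2*m+1) x⟩ (hPmem2 (2*m+1) x)
    have h2 : A2 ⟨x, hx2⟩ = A ⟨A ⟨x, hx⟩, hrange ⟨x, hx⟩⟩ := hA2 ⟨x, hx⟩ hx2
    rw [h1, h2]
    set y : H := A ⟨x, hx⟩ with hy_def
    have hy : y ∈ A.domain := hrange ⟨x, hx⟩
    have hstep : A ⟨P (2*m+1) x, hPmem (2*m+1) x⟩
        = P (2*m+1) y + (((2*m+1:ℕ):ℂ))⁻¹ • (inner ℂ (e (2*m)) x : ℂ) • e (2*m+1) := by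
      rw [← keyOdd m x hx]
      abel
    have h3 : (⟨A ⟨P (2*m+1) x, hPmem (2*m+1) x⟩,
          hrange ⟨P (2*m+1) x, hPmem (2*m+1) x⟩⟩ : A.domain)
        = ⟨P (2*m+1) y, hPmem (2*m+1) y⟩
          + ((((2*m+1:ℕ):ℂ))⁻¹ * (inner ℂ (e (2*m)) x : ℂ)) • ⟨e (2*m+1), hedom (2*m+1)⟩ := by
      apply Subtype.ext
      show A ⟨P (2*m+1) x, hPmem (2*m+1) x⟩
        = P (2*m+1) y + ((((2*m+1:ℕ):ℂ))⁻¹ * (inner ℂ (e (2*m)) x : ℂ)) • e (2*m+1)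
      rw [hstep, smul_smul]
    rw [h3, A.map_add, A.map_smul, hAeven m, add_sub_right_comm,
      keyOdd m y hy, hy_def, hinner m x hx]
    have hne : ((2*m+1:ℕ):ℂ) ≠ 0 := Nat.cast_ne_zero.mpr (by omega)
    simp only [smul_smul]
    rw [← add_smul]
    congr 1
    field_simp
  haveI hNE : Nonempty {x : H // x ∈ A.domain ∧ ‖x‖ ≤ 1} :=
    ⟨⟨0, A.domain.zero_mem, by simp⟩⟩
  haveI hNE2 : Nonempty {x : H // x ∈ A2.domain ∧ ‖x‖ ≤ 1} :=
    ⟨⟨0, A2.domain.zero_mem, by simp⟩⟩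
  have hnorme : ∀ i, ‖(e i : H)‖ = 1 := e.orthonormal.1
  have hvalA : ∀ (m : ℕ) (x : H) (hx : x ∈ A.domain),
      ‖A ⟨P (2*m+1) x, hPmem (2*m+1) x⟩ - P (2*m+1) (A ⟨x, hx⟩)‖
        = ((2*m+1:ℕ):ℝ)⁻¹ * ‖(inner ℂ (e (2*m)) x : ℂ)‖ := by
    intro m x hx
    rw [keyOdd m x hx, norm_smul, norm_smul, hnorme, mul_one, norm_inv,
      RCLike.norm_natCast]
  have hinner1 : ∀ (k : ℕ) (ψ : {x : H // x ∈ A.domain ∧ ‖x‖ ≤ 1}),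
      ‖(inner ℂ (e k) ψ.1 : ℂ)‖ ≤ 1 := by
    intro k ψ
    calc ‖(inner ℂ (e k) ψ.1 : ℂ)‖ ≤ ‖(e k : H)‖ * ‖ψ.1‖ := norm_inner_le_norm _ _
      _ = ‖ψ.1‖ := by rw [hnorme, one_mul]
      _ ≤ 1 := ψ.2.2
  have hbdA : ∀ (m : ℕ) (ψ : {x : H // x ∈ A.domain ∧ ‖x‖ ≤ 1}),
      ‖A ⟨P (2*m+1) ψ.1, hPmem (2*m+1) ψ.1⟩ - P (2*m+1) (A ⟨ψ.1, ψ.2.1⟩)‖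
        ≤ ((2*m+1:ℕ):ℝ)⁻¹ := by
    intro m ψ
    rw [hvalA m ψ.1 ψ.2.1]
    calc ((2*m+1:ℕ):ℝ)⁻¹ * ‖(inner ℂ (e (2*m)) ψ.1 : ℂ)‖
        ≤ ((2*m+1:ℕ):ℝ)⁻¹ * 1 :=
          mul_le_mul_of_nonneg_left (hinner1 (2*m) ψ) (by positivity)
      _ = ((2*m+1:ℕ):ℝ)⁻¹ := mul_one _
  have part1 : ∀ m : ℕ,
      (⨆ ψ : {x : H // x ∈ A.domain ∧ ‖x‖ ≤ 1},
        ‖A ⟨P (2 * m + 1) ψ.1, hPmem (2 * m + 1) ψ.1⟩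
          - P (2 * m + 1) (A ⟨ψ.1, ψ.2.1⟩)‖)
        = ((2 * m + 1 : ℝ))⁻¹ := by
    intro m
    have hcast : ((2*m+1:ℕ):ℝ)⁻¹ = ((2 * m + 1 : ℝ))⁻¹ := by push_cast; ring
    have hBdd : BddAbove (Set.range fun ψ : {x : H // x ∈ A.domain ∧ ‖x‖ ≤ 1} =>
        ‖A ⟨P (2*m+1) ψ.1, hPmem (2*m+1) ψ.1⟩ - P (2*m+1) (A ⟨ψ.1, ψ.2.1⟩)‖) := by
      refine ⟨((2*m+1:ℕ):ℝ)⁻¹, ?_⟩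
      rintro _ ⟨ψ, rfl⟩
      exact hbdA m ψ
    refine le_antisymm (ciSup_le fun ψ => le_trans (hbdA m ψ) hcast.le) ?_
    calc ((2 * m + 1 : ℝ))⁻¹ = ((2*m+1:ℕ):ℝ)⁻¹ := hcast.symm
      _ = ‖A ⟨P (2*m+1) (e (2*m)), hPmem (2*m+1) (e (2*m))⟩
            - P (2*m+1) (A ⟨e (2*m), hedom (2*m)⟩)‖ := by
          rw [hvalA m (e (2*m)) (hedom (2*m)), horth, if_pos rfl, norm_one, mul_one]
      _ ≤ _ := le_ciSup hBdd ⟨e (2*m), hedom (2*m), le_of_eq (hnorme (2*m))⟩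
  have part2 : ∀ m : ℕ,
      (⨆ ψ : {x : H // x ∈ A.domain ∧ ‖x‖ ≤ 1},
        ‖A ⟨P (2 * m + 2) ψ.1, hPmem (2 * m + 2) ψ.1⟩
          - P (2 * m + 2) (A ⟨ψ.1, ψ.2.1⟩)‖) = 0 := by
    intro m
    refine le_antisymm (ciSup_le fun ψ => le_of_eq ?_)
      (Real.iSup_nonneg fun ψ => norm_nonneg _)
    rw [keyEven (2*m+2) (by omega) ψ.1 ψ.2.1, norm_zero]
  have part3 : Filter.Tendsto (fun n : ℕ =>
        ⨆ ψ : {x : H // x ∈ A.domain ∧ ‖x‖ ≤ 1},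
          ‖A ⟨P n ψ.1, hPmem n ψ.1⟩ - P n (A ⟨ψ.1, ψ.2.1⟩)‖)
      Filter.atTop (nhds 0) := by
    refine squeeze_zero (fun n => Real.iSup_nonneg fun ψ => norm_nonneg _)
      (fun n => ?_) tendsto_inv_atTop_nhds_zero_nat
    refine ciSup_le fun ψ => ?_
    rcases Nat.even_or_odd n with hn | hn
    · rw [keyEven n (by rcases hn with ⟨t, ht⟩; omega) ψ.1 ψ.2.1, norm_zero]
      positivity
    · obtain ⟨m, rfl⟩ := hn
      exact hbdA m ψ
  have hvalA2 : ∀ (m : ℕ) (x : H) (hx2 : x ∈ A2.domain),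
      ‖A2 ⟨P (2*m+1) x, hPmem2 (2*m+1) x⟩ - P (2*m+1) (A2 ⟨x, hx2⟩)‖
        = (((2 * m + 1 : ℝ) ^ 2 + (2 * m + 2 : ℝ) ^ 2) / (2 * m + 1 : ℝ))
          * ‖(inner ℂ (e (2*m)) x : ℂ)‖ := by
    intro m x hx2
    have hC : ((((2*m+1:ℕ):ℂ)^2 + ((2*m+2:ℕ):ℂ)^2) / ((2*m+1:ℕ):ℂ))
        = ((((2 * m + 1 : ℝ) ^ 2 + (2 * m + 2 : ℝ) ^ 2) / (2 * m + 1 : ℝ) : ℝ) : ℂ) := by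
      push_cast
      ring
    rw [keyOdd2 m x hx2, norm_smul, norm_smul, hnorme, mul_one, hC,
      Complex.norm_real, Real.norm_eq_abs, abs_of_nonneg (by positivity)]
  have hbdA2 : ∀ (m : ℕ) (ψ : {x : H // x ∈ A2.domain ∧ ‖x‖ ≤ 1}),
      ‖A2 ⟨P (2*m+1) ψ.1, hPmem2 (2*m+1) ψ.1⟩ - P (2*m+1) (A2 ⟨ψ.1, ψ.2.1⟩)‖
        ≤ ((2 * m + 1 : ℝ) ^ 2 + (2 * m + 2 : ℝ) ^ 2) / (2 * m + 1 : ℝ) := by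
    intro m ψ
    rw [hvalA2 m ψ.1 ψ.2.1]
    have h1 : ‖(inner ℂ (e (2*m)) ψ.1 : ℂ)‖ ≤ 1 := by
      calc ‖(inner ℂ (e (2*m)) ψ.1 : ℂ)‖ ≤ ‖(e (2*m) : H)‖ * ‖ψ.1‖ :=
            norm_inner_le_norm _ _
        _ = ‖ψ.1‖ := by rw [hnorme, one_mul]
        _ ≤ 1 := ψ.2.2
    calc _ ≤ (((2 * m + 1 : ℝ) ^ 2 + (2 * m + 2 : ℝ) ^ 2) / (2 * m + 1 : ℝ)) * 1 :=
          mul_le_mul_of_nonneg_left h1 (by positivity)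
      _ = _ := mul_one _
  have part4 : ∀ m : ℕ,
      (⨆ ψ : {x : H // x ∈ A2.domain ∧ ‖x‖ ≤ 1},
        ‖A2 ⟨P (2 * m + 1) ψ.1, hPmem2 (2 * m + 1) ψ.1⟩
          - P (2 * m + 1) (A2 ⟨ψ.1, ψ.2.1⟩)‖)
        = ((2 * m + 1 : ℝ) ^ 2 + (2 * m + 2 : ℝ) ^ 2) / (2 * m + 1 : ℝ) := by
    intro m
    have hBdd : BddAbove (Set.range fun ψ : {x : H // x ∈ A2.domain ∧ ‖x‖ ≤ 1} =>
        ‖A2 ⟨P (2*m+1) ψ.1, hPmem2 (2*m+1) ψ.1⟩ - P (2*m+1) (A2 ⟨ψ.1, ψ.2.1⟩)‖) := by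
      refine ⟨((2 * m + 1 : ℝ) ^ 2 + (2 * m + 2 : ℝ) ^ 2) / (2 * m + 1 : ℝ), ?_⟩
      rintro _ ⟨ψ, rfl⟩
      exact hbdA2 m ψ
    refine le_antisymm (ciSup_le fun ψ => hbdA2 m ψ) ?_
    calc ((2 * m + 1 : ℝ) ^ 2 + (2 * m + 2 : ℝ) ^ 2) / (2 * m + 1 : ℝ)
        = ‖A2 ⟨P (2*m+1) (e (2*m)), hPmem2 (2*m+1) (e (2*m))⟩
            - P (2*m+1) (A2 ⟨e (2*m), hedom2 (2*m)⟩)‖ := by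
          rw [hvalA2 m (e (2*m)) (hedom2 (2*m)), horth, if_pos rfl, norm_one, mul_one]
      _ ≤ _ := le_ciSup hBdd ⟨e (2*m), hedom2 (2*m), le_of_eq (hnorme (2*m))⟩
  refine ⟨part1, part2, part3, part4, ?_⟩
  have heq : (fun m : ℕ =>
      ⨆ ψ : {x : H // x ∈ A2.domain ∧ ‖x‖ ≤ 1},
        ‖A2 ⟨P (2 * m + 1) ψ.1, hPmem2 (2 * m + 1) ψ.1⟩
          - P (2 * m + 1) (A2 ⟨ψ.1, ψ.2.1⟩)‖)
      = fun m : ℕ => ((2 * m + 1 : ℝ) ^ 2 + (2 * m + 2 : ℝ) ^ 2) / (2 * m + 1 : ℝ) :=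
    funext part4
  rw [heq]
  refine tendsto_atTop_mono (fun m => ?_) tendsto_natCast_atTop_atTop
  rw [le_div_iff₀ (by positivity)]
  nlinarith [sq_nonneg ((m:ℝ))]
end

section
/- The Weyl algebra W = ℂ⟨p, q | qp − pq = i·1⟩ is algebraically amenable: for every ε > 0 and every finite set F ⊆ W there exists a nonzero finite-dimensional linear subspace V ⊆ W with dim(aV + V) ≤ (1 + ε) dim(V) for every a ∈ F. -/
/-- The canonical commutation relation `q * p = p * q + i` on the free algebra
on two generators `p = ι false`, `q = ι true`. -/
inductive WeylRel : FreeAlgebra ℂ Bool → FreeAlgebra ℂ Bool → Prop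
  | ccr : WeylRel (FreeAlgebra.ι ℂ true * FreeAlgebra.ι ℂ false)
      (FreeAlgebra.ι ℂ false * FreeAlgebra.ι ℂ true
        + algebraMap ℂ (FreeAlgebra ℂ Bool) Complex.I)

/-- The Weyl algebra `W = ℂ⟨p, q | qp - pq = i·1⟩`. -/
abbrev WeylAlgebra := RingQuot WeylRel

open Polynomial
noncomputable def Wp : WeylAlgebra := RingQuot.mkAlgHom ℂ WeylRel (FreeAlgebra.ι ℂ false)
noncomputable def Wq : WeylAlgebra := RingQuot.mkAlgHom ℂ WeylRel (FreeAlgebra.ι ℂ true)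
noncomputable def WM (k l : ℕ) : WeylAlgebra := Wp ^ k * Wq ^ l

theorem Wccr : Wq * Wp = Wp * Wq + algebraMap ℂ WeylAlgebra Complex.I := by
  have h := RingQuot.mkAlgHom_rel ℂ WeylRel.ccr
  simpa [Wp, Wq, map_mul, map_add, AlgHom.commutes] using h
noncomputable def rep0 : FreeAlgebra ℂ Bool →ₐ[ℂ] Module.End ℂ (Polynomial ℂ) :=
  FreeAlgebra.lift ℂ (fun b => if b then Complex.I • (Polynomial.derivative : ℂ[X] →ₗ[ℂ] ℂ[X])
    else LinearMap.mulLeft ℂ (X : ℂ[X]))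
theorem rep0_rel : ∀ ⦃x y⦄, WeylRel x y → rep0 x = rep0 y := by
  rintro _ _ ⟨⟩
  apply LinearMap.ext; intro f
  simp [rep0, Module.End.mul_apply, Module.algebraMap_end_apply, derivative_mul,
    mul_smul_comm, smul_add]
  module
noncomputable def Wrep : WeylAlgebra →ₐ[ℂ] Module.End ℂ (Polynomial ℂ) :=
  RingQuot.liftAlgHom ℂ ⟨rep0, rep0_rel⟩
theorem Wrep_p : Wrep Wp = LinearMap.mulLeft ℂ (X : ℂ[X]) := by
  simp [Wrep, Wp, RingQuot.liftAlgHom_mkAlgHom_apply, rep0]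
theorem Wrep_q : Wrep Wq = Complex.I • (derivative : ℂ[X] →ₗ[ℂ] ℂ[X]) := by
  simp [Wrep, Wq, RingQuot.liftAlgHom_mkAlgHom_apply, rep0]
theorem Wrep_M_apply (k l m : ℕ) :
    Wrep (WM k l) (X ^ m : ℂ[X]) =
      (Complex.I ^ l * (Nat.descFactorial m l : ℂ)) • X ^ (k + (m - l)) := by
  have hD : ((Complex.I • (derivative : ℂ[X] →ₗ[ℂ] ℂ[X])) ^ l) (X ^ m)
      = (Complex.I ^ l * (Nat.descFactorial m l : ℂ)) • X ^ (m - l) := by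
    rw [_root_.smul_pow, LinearMap.smul_apply, Module.End.pow_apply,
      Polynomial.iterate_derivative_X_pow_eq_smul, smul_smul]
  have hqq : Wrep (Wq ^ l) = (Complex.I • (derivative : ℂ[X] →ₗ[ℂ] ℂ[X])) ^ l := by
    rw [map_pow, Wrep_q]
  have hpp : Wrep (Wp ^ k) = LinearMap.mulLeft ℂ ((X : ℂ[X]) ^ k) := by
    rw [map_pow, Wrep_p, LinearMap.pow_mulLeft]
  rw [WM, map_mul, hpp, hqq, Module.End.mul_apply, hD, LinearMap.map_smul,
    LinearMap.mulLeft_apply, ← pow_add]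

noncomputable def Wv : ℕ × ℕ → WeylAlgebra := fun i => WM i.1 i.2

theorem Wv_li : LinearIndependent ℂ Wv := by
  apply LinearIndependent.of_comp Wrep.toLinearMap
  rw [linearIndependent_iff']
  intro s g hg
  suffices H : ∀ l k, (k, l) ∈ s → g (k, l) = 0 by
    intro i hi; exact H i.2 i.1 (by simpa using hi)
  intro l
  induction l using Nat.strong_induction_on with
  | _ l IH =>
    intro k hk
    have h0 : ∑ i ∈ s, g i • (Wrep (Wv i) (X ^ l : ℂ[X])) = 0 := by
      have := congrArg (fun f : Module.End ℂ ℂ[X] => f (X ^ l)) hg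
      simpa [LinearMap.sum_apply] using this
    have h1 : ∑ i ∈ s,
        g i * ((Complex.I ^ i.2 * (Nat.descFactorial l i.2 : ℂ)) *
          (if k = i.1 + (l - i.2) then 1 else 0)) = 0 := by
      have := congrArg (fun p : ℂ[X] => p.coeff k) h0
      simpa [Wv, Wrep_M_apply, Polynomial.finset_sum_coeff, Polynomial.coeff_smul,
        Polynomial.coeff_X_pow, smul_eq_mul, mul_ite, mul_one, mul_zero] using this
    rw [Finset.sum_eq_single (k, l)] at h1
    · simp only [Nat.sub_self, Nat.add_zero, eq_self_iff_true, if_true, mul_one] at h1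
      have hI : Complex.I ^ l * (Nat.descFactorial l l : ℂ) ≠ 0 := by
        apply mul_ne_zero (pow_ne_zero _ Complex.I_ne_zero)
        simp [Nat.descFactorial_self]
        exact_mod_cast Nat.factorial_ne_zero l
      exact (mul_eq_zero.mp h1).resolve_right hI
    · rintro ⟨k', l'⟩ _ hne
      rcases lt_trichotomy l' l with h | h | h
      · rw [IH l' h k' ‹(k', l') ∈ s›, zero_mul]
      · subst h
        have : ¬ (k = k' + (l' - l')) := by
          simp only [Nat.sub_self, Nat.add_zero]
          rintro rfl; exact hne rfl
        rw [if_neg this, mul_zero, mul_zero]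
      · rw [Nat.descFactorial_eq_zero_iff_lt.mpr h]
        simp
    · intro h; exact absurd hk h

def WS (n : ℕ) : Finset (ℕ × ℕ) :=
  (Finset.range (n+1)).biUnion (fun m => Finset.HasAntidiagonal.antidiagonal m)

theorem mem_WS {n : ℕ} {i : ℕ × ℕ} : i ∈ WS n ↔ i.1 + i.2 ≤ n := by
  simp only [WS, Finset.mem_biUnion, Finset.mem_range, Finset.HasAntidiagonal.mem_antidiagonal, Nat.lt_succ_iff]
  constructor
  · rintro ⟨m, hm, rfl⟩; exact hm
  · intro h; exact ⟨_, h, rfl⟩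

theorem card_WS (n : ℕ) : 2 * (WS n).card = (n+1) * (n+2) := by
  rw [WS, Finset.card_biUnion]
  · have h1 : ∀ N : ℕ, 2 * ∑ m ∈ Finset.range (N+1), (Finset.HasAntidiagonal.antidiagonal m).card
        = (N+1)*(N+2) := by
      intro N
      induction N with
      | zero => simp
      | succ N ih =>
        rw [Finset.sum_range_succ, Nat.mul_add, ih, Finset.Nat.card_antidiagonal]
        ring
    exact h1 n
  · intro x _ y _ hxy
    rw [Function.onFun, Finset.disjoint_left]
    intro a ha ha'
    rw [Finset.HasAntidiagonal.mem_antidiagonal] at ha ha'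
    exact hxy (ha ▸ ha')

noncomputable def VV (n : ℕ) : Submodule ℂ WeylAlgebra :=
  Submodule.span ℂ (Wv '' ↑(WS n))

theorem VV_mono {m n : ℕ} (h : m ≤ n) : VV m ≤ VV n := by
  apply Submodule.span_mono
  apply Set.image_mono
  intro i hi
  simp only [Finset.mem_coe, mem_WS] at hi ⊢
  omega

theorem Wv_mem_VV {n : ℕ} {k l : ℕ} (h : k + l ≤ n) : WM k l ∈ VV n :=
  Submodule.subset_span ⟨(k, l), by simpa [mem_WS] using h, rfl⟩

theorem Wqp_pow (k : ℕ) : Wq * Wp ^ (k+1)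
    = Wp ^ (k+1) * Wq + (((k+1 : ℕ) : ℂ) * Complex.I) • Wp ^ k := by
  induction k with
  | zero => simpa [Algebra.algebraMap_eq_smul_one] using Wccr
  | succ k ih =>
    have h1 : Wq * Wp ^ (k+2) = (Wq * Wp ^ (k+1)) * Wp := by rw [mul_assoc, ← pow_succ]
    rw [h1, ih, add_mul, smul_mul_assoc, mul_assoc, Wccr, mul_add, ← mul_assoc, ← pow_succ,
      ← Algebra.commutes, ← Algebra.smul_def, ← pow_succ]
    push_cast
    module

theorem Wq_mul_mem {n : ℕ} {x : WeylAlgebra} (hx : x ∈ VV n) : Wq * x ∈ VV (n+1) := by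
  induction hx using Submodule.span_induction with
  | mem x hxs =>
    obtain ⟨⟨k, l⟩, hi, rfl⟩ := hxs
    rw [Finset.mem_coe, mem_WS] at hi
    match k with
    | 0 =>
      have : Wq * Wv (0, l) = WM 0 (l+1) := by
        simp only [Wv, WM, pow_zero, one_mul, pow_succ']
      rw [this]
      exact Wv_mem_VV (by omega)
    | k+1 =>
      have : Wq * Wv (k+1, l) = WM (k+1) (l+1) + (((k+1:ℕ):ℂ) * Complex.I) • WM k l := by
        simp only [Wv, WM, ← mul_assoc, Wqp_pow, add_mul, smul_mul_assoc]
        rw [mul_assoc, ← pow_succ']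
      rw [this]
      exact Submodule.add_mem _ (Wv_mem_VV (by omega))
        (Submodule.smul_mem _ _ (Wv_mem_VV (by omega)))
  | zero => simpa using Submodule.zero_mem _
  | add x y _ _ ihx ihy => simpa [mul_add] using Submodule.add_mem _ ihx ihy
  | smul a x _ ihx => simpa [mul_smul_comm] using Submodule.smul_mem _ a ihx

theorem Wp_mul_mem {n : ℕ} {x : WeylAlgebra} (hx : x ∈ VV n) : Wp * x ∈ VV (n+1) := by
  induction hx using Submodule.span_induction with
  | mem x hxs =>
    obtain ⟨⟨k, l⟩, hi, rfl⟩ := hxs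
    rw [Finset.mem_coe, mem_WS] at hi
    have : Wp * Wv (k, l) = WM (k+1) l := by
      simp only [Wv, WM, ← mul_assoc, ← pow_succ']
    rw [this]
    exact Wv_mem_VV (by omega)
  | zero => simpa using Submodule.zero_mem _
  | add x y _ _ ihx ihy => simpa [mul_add] using Submodule.add_mem _ ihx ihy
  | smul a x _ ihx => simpa [mul_smul_comm] using Submodule.smul_mem _ a ihx

theorem Wq_pow_mul_mem {n : ℕ} (l : ℕ) {x : WeylAlgebra} (hx : x ∈ VV n) :
    Wq ^ l * x ∈ VV (n + l) := by
  induction l with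
  | zero => simpa using hx
  | succ l ih =>
    have : Wq ^ (l+1) * x = Wq * (Wq ^ l * x) := by rw [← mul_assoc, ← pow_succ']
    rw [this]
    exact Wq_mul_mem ih

theorem Wp_pow_mul_mem {n : ℕ} (k : ℕ) {x : WeylAlgebra} (hx : x ∈ VV n) :
    Wp ^ k * x ∈ VV (n + k) := by
  induction k with
  | zero => simpa using hx
  | succ k ih =>
    have : Wp ^ (k+1) * x = Wp * (Wp ^ k * x) := by rw [← mul_assoc, ← pow_succ']
    rw [this]
    exact Wp_mul_mem ih

theorem VV_mul_mem {m n : ℕ} {x y : WeylAlgebra} (hx : x ∈ VV m) (hy : y ∈ VV n) :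
    x * y ∈ VV (m + n) := by
  induction hx using Submodule.span_induction with
  | mem x hxs =>
    obtain ⟨⟨k, l⟩, hi, rfl⟩ := hxs
    rw [Finset.mem_coe, mem_WS] at hi
    have : Wv (k, l) * y = Wp ^ k * (Wq ^ l * y) := by rw [Wv, WM, mul_assoc]
    rw [this]
    exact VV_mono (by omega) (Wp_pow_mul_mem k (Wq_pow_mul_mem l hy))
  | zero => simpa using Submodule.zero_mem _
  | add x y _ _ ihx ihy => simpa [add_mul] using Submodule.add_mem _ ihx ihy
  | smul a x _ ihx => simpa [smul_mul_assoc] using Submodule.smul_mem _ a ihx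

theorem exists_mem_VV (a : WeylAlgebra) : ∃ n, a ∈ VV n := by
  have htop : a ∈ Algebra.adjoin ℂ
      ((RingQuot.mkAlgHom ℂ WeylRel) '' Set.range (FreeAlgebra.ι ℂ)) := by
    rw [← AlgHom.map_adjoin, FreeAlgebra.adjoin_range_ι, Algebra.map_top,
      (AlgHom.range_eq_top _).mpr (RingQuot.mkAlgHom_surjective ℂ WeylRel)]
    trivial
  induction htop using Algebra.adjoin_induction with
  | mem x hxs =>
    obtain ⟨-, ⟨b, rfl⟩, rfl⟩ := hxs
    cases b
    · exact ⟨1, by simpa [WM, Wp] using Wv_mem_VV (n := 1) (k := 1) (l := 0) (by omega)⟩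
    · exact ⟨1, by simpa [WM, Wq] using Wv_mem_VV (n := 1) (k := 0) (l := 1) (by omega)⟩
  | algebraMap r =>
    refine ⟨0, ?_⟩
    have h1 : (1 : WeylAlgebra) ∈ VV 0 := by
      simpa [WM] using Wv_mem_VV (n := 0) (k := 0) (l := 0) (by omega)
    simpa [Algebra.algebraMap_eq_smul_one] using Submodule.smul_mem _ r h1
  | add x y _ _ ihx ihy =>
    obtain ⟨m, hm⟩ := ihx; obtain ⟨n, hn⟩ := ihy
    exact ⟨max m n, Submodule.add_mem _ (VV_mono (le_max_left _ _) hm)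
      (VV_mono (le_max_right _ _) hn)⟩
  | mul x y _ _ ihx ihy =>
    obtain ⟨m, hm⟩ := ihx; obtain ⟨n, hn⟩ := ihy
    exact ⟨m + n, VV_mul_mem hm hn⟩

instance VV_fd (n : ℕ) : FiniteDimensional ℂ (VV n) :=
  FiniteDimensional.span_of_finite ℂ ((WS n).finite_toSet.image Wv)

theorem finrank_VV (n : ℕ) : Module.finrank ℂ (VV n) = (WS n).card := by
  have hb : LinearIndependent ℂ (fun i : (WS n : Finset (ℕ × ℕ)) => Wv i) :=
    Wv_li.comp _ Subtype.val_injective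
  have h1 := finrank_span_eq_card hb
  rw [VV, Set.image_eq_range Wv (WS n : Set (ℕ × ℕ))]
  rw [show (Set.range fun x : (WS n : Set (ℕ × ℕ)) => Wv x)
      = Set.range (fun i : (WS n : Finset (ℕ × ℕ)) => Wv i) from rfl, h1, Fintype.card_coe]

theorem Wexists_bound (F : Finset WeylAlgebra) : ∃ d, ∀ a ∈ F, a ∈ VV d := by
  classical
  induction F using Finset.induction with
  | empty => exact ⟨0, by simp⟩
  | insert _ _ h ih =>
    obtain ⟨d, hd⟩ := ih
    obtain ⟨d', hd'⟩ := exists_mem_VV _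
    refine ⟨max d' d, fun b hb => ?_⟩
    rcases Finset.mem_insert.mp hb with rfl | hb
    · exact VV_mono (le_max_left _ _) hd'
    · exact VV_mono (le_max_right _ _) (hd b hb)


/-- the Weyl algebra is algebraically amenable: for every `ε > 0`
and every finite subset `F`, there is a nonzero finite-dimensional subspace `V`
with `dim (a V + V) ≤ (1 + ε) dim V` for all `a ∈ F`. -/
theorem stmt_15 {ε : ℝ} (hε : 0 < ε) (F : Finset WeylAlgebra) :
    ∃ V : Submodule ℂ WeylAlgebra, V ≠ ⊥ ∧ FiniteDimensional ℂ V ∧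
      ∀ a ∈ F,
        (Module.finrank ℂ ↥(Submodule.map (LinearMap.mulLeft ℂ a) V ⊔ V) : ℝ)
          ≤ (1 + ε) * (Module.finrank ℂ ↥V : ℝ) := by
  obtain ⟨d, hd⟩ := Wexists_bound F
  obtain ⟨n0, hn0⟩ := exists_nat_ge (((d : ℝ)^2 + 5*d) / ε)
  set n := max n0 1 with hn
  refine ⟨VV n, ?_, inferInstance, ?_⟩
  · rw [Submodule.ne_bot_iff]
    exact ⟨Wv (0, 0), Wv_mem_VV (by omega), Wv_li.ne_zero (0, 0)⟩
  · intro a ha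
    have hle : Submodule.map (LinearMap.mulLeft ℂ a) (VV n) ⊔ VV n ≤ VV (n + d) := by
      apply sup_le
      · rintro y ⟨x, hx, rfl⟩
        simpa [Nat.add_comm] using VV_mul_mem (hd a ha) hx
      · exact VV_mono (Nat.le_add_right _ _)
    have h2 : Module.finrank ℂ ↥(Submodule.map (LinearMap.mulLeft ℂ a) (VV n) ⊔ VV n)
        ≤ (WS (n + d)).card := by
      rw [← finrank_VV (n + d)]
      exact Submodule.finrank_mono hle
    rw [finrank_VV n]
    have hc1 := card_WS (n + d)
    have hc0 := card_WS n
    have hc1' : 2 * ((WS (n + d)).card : ℝ) = (n + d + 1) * (n + d + 2) := by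
      exact_mod_cast congrArg (Nat.cast : ℕ → ℝ) hc1
    have hc0' : 2 * ((WS n).card : ℝ) = (n + 1) * (n + 2) := by
      exact_mod_cast congrArg (Nat.cast : ℕ → ℝ) hc0
    have hεn : (d : ℝ)^2 + 5*d ≤ ε * n := by
      have h1 : ((d : ℝ)^2 + 5*d) / ε ≤ n := by
        refine hn0.trans ?_
        exact_mod_cast Nat.le_max_left n0 1
      calc (d : ℝ)^2 + 5*d = (((d : ℝ)^2 + 5*d) / ε) * ε := by field_simp
      _ ≤ n * ε := by exact mul_le_mul_of_nonneg_right h1 hε.le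
      _ = ε * n := mul_comm _ _
    have hn1 : (1 : ℝ) ≤ n := by exact_mod_cast Nat.le_max_right n0 1
    have key : ((WS (n + d)).card : ℝ) ≤ (1 + ε) * ((WS n).card : ℝ) := by
      have hd0 : (0 : ℝ) ≤ d := Nat.cast_nonneg d
      nlinarith [mul_nonneg (sub_nonneg.mpr hεn) (by linarith : (0:ℝ) ≤ (n:ℝ)),
        mul_nonneg hd0 (sub_nonneg.mpr hn1), mul_nonneg (mul_nonneg hd0 hd0) (sub_nonneg.mpr hn1),
        mul_nonneg hd0 hd0]
    calc (Module.finrank ℂ ↥(Submodule.map (LinearMap.mulLeft ℂ a) (VV n) ⊔ VV n) : ℝ)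
        ≤ ((WS (n + d)).card : ℝ) := by exact_mod_cast h2
      _ ≤ (1 + ε) * ((WS n).card : ℝ) := key
end

section
/- Let a and a* be the annihilation and creation operators on ℓ²(ℕ₀) defined on c₀₀ by a* ψ_n = √(n+1) ψ_{n+1} and a ψ_n = √n ψ_{n−1} (a ψ_0 = 0), and let Q = (a* + a)/√2, P = i(a* − a)/√2 with domain c₀₀, and P_n the canonical projections. Then ‖[Q, P_n] ψ_n‖ = ‖[P, P_n] ψ_n‖ = √(n/2), so {P_n} is not a quasidiagonalizing sequence for Q or for P. -/
open Filter

lemma aux_comm {H : Type*} [NormedAddCommGroup H] [InnerProductSpace ℂ H]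
    (e : HilbertBasis ℕ ℂ H) (T : H →ₗ.[ℂ] H)
    (hdom : T.domain = Submodule.span ℂ (Set.range ⇑e))
    (hedom : ∀ k, (e k : H) ∈ T.domain)
    (Pr : ℕ → H →L[ℂ] H)
    (hPr : ∀ n x, Pr n x = ∑ i ∈ Finset.range n, ((inner ℂ (e i) x : ℂ) • e i))
    (hPrmem : ∀ n x, Pr n x ∈ T.domain)
    (α β : ℕ → ℂ)
    (hT : ∀ k, T ⟨e k, hedom k⟩ = α k • e (k + 1) + β k • e (k - 1))
    (n : ℕ) :
    ∀ (x : H) (hx : x ∈ T.domain),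
      T ⟨Pr (n+1) x, hPrmem (n+1) x⟩ - Pr (n+1) (T ⟨x, hx⟩)
        = (inner ℂ (e n) x : ℂ) • (α n • e (n + 1))
          - (inner ℂ (e (n+1)) x : ℂ) • (β (n+1) • e n) := by
  have hinner : ∀ i j : ℕ, (inner ℂ (e i) (e j) : ℂ) = if i = j then 1 else 0 :=
    orthonormal_iff_ite.mp e.orthonormal
  have hPre : ∀ m k : ℕ, Pr m (e k) = if k < m then e k else 0 := by
    intro m k
    rw [hPr]
    simp only [hinner]
    rw [Finset.sum_congr rfl (g := fun i => if i = k then e i else 0)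
      (by intro i _; by_cases h : i = k <;> simp [h])]
    rw [Finset.sum_ite_eq' (Finset.range m) k (fun i => e i)]
    simp [Finset.mem_range]
  have key : ∀ (x : H), x ∈ Submodule.span ℂ (Set.range ⇑e) →
      ∀ hx : x ∈ T.domain,
      T ⟨Pr (n+1) x, hPrmem (n+1) x⟩ - Pr (n+1) (T ⟨x, hx⟩)
        = (inner ℂ (e n) x : ℂ) • (α n • e (n + 1))
          - (inner ℂ (e (n+1)) x : ℂ) • (β (n+1) • e n) := by
    intro x hxs
    induction hxs using Submodule.span_induction with
    | mem y hy =>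
      intro hxd
      obtain ⟨k, rfl⟩ := hy
      have hTk : T ⟨e k, hxd⟩ = α k • e (k + 1) + β k • e (k - 1) := hT k
      rw [hTk, map_add, map_smul, map_smul,
        hPre (n+1) (k+1), hPre (n+1) (k-1), hinner n k, hinner (n+1) k]
      rcases lt_trichotomy k n with hk | heq | hk
      · -- k < n
        have hv : Pr (n+1) (e k) = e k := by
          rw [hPre]; simp [Nat.lt_succ_of_lt hk]
        have h1 : (⟨Pr (n+1) (e k), hPrmem (n+1) (e k)⟩ : T.domain) = ⟨e k, hedom k⟩ :=
          Subtype.ext hv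
        rw [h1, hT,
          if_pos (show k+1 < n+1 by omega), if_pos (show k-1 < n+1 by omega),
          if_neg (show ¬ n = k by omega), if_neg (show ¬ n+1 = k by omega)]
        simp
      · -- k = n
        subst heq
        have hv : Pr (k+1) (e k) = e k := by
          rw [hPre]; simp
        have h1 : (⟨Pr (k+1) (e k), hPrmem (k+1) (e k)⟩ : T.domain) = ⟨e k, hedom k⟩ :=
          Subtype.ext hv
        rw [h1, hT,
          if_neg (show ¬ k+1 < k+1 by omega), if_pos (show k-1 < k+1 by omega),
          if_pos rfl, if_neg (show ¬ k+1 = k by omega)]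
        simp
      · -- n < k
        have hv : Pr (n+1) (e k) = 0 := by
          rw [hPre]; simp [show ¬ k < n + 1 by omega]
        have h1 : (⟨Pr (n+1) (e k), hPrmem (n+1) (e k)⟩ : T.domain) = 0 :=
          Subtype.ext hv
        rw [h1, T.map_zero]
        rcases eq_or_lt_of_le (Nat.succ_le_of_lt hk) with hk1 | hk1
        · -- k = n + 1
          subst hk1
          rw [if_neg (show ¬ n+1+1 < n+1 by omega), if_pos (show n+1-1 < n+1 by omega),
            if_neg (show ¬ n = n+1 by omega), if_pos rfl]
          simp
        · -- n + 1 < k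
          rw [if_neg (show ¬ k+1 < n+1 by omega), if_neg (show ¬ k-1 < n+1 by omega),
            if_neg (show ¬ n = k by omega), if_neg (show ¬ n+1 = k by omega)]
          simp
    | zero =>
      intro hxd
      have h0 : (⟨Pr (n+1) (0 : H), hPrmem (n+1) 0⟩ : T.domain) = 0 :=
        Subtype.ext (by simp)
      have h0' : (⟨(0 : H), hxd⟩ : T.domain) = 0 := Subtype.ext rfl
      rw [h0, h0', T.map_zero]
      simp
    | add y z hys hzs ihy ihz =>
      intro hxd
      have hyd : y ∈ T.domain := hdom ▸ hys
      have hzd : z ∈ T.domain := hdom ▸ hzs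
      have h1 : (⟨Pr (n+1) (y + z), hPrmem (n+1) (y + z)⟩ : T.domain)
          = ⟨Pr (n+1) y, hPrmem (n+1) y⟩ + ⟨Pr (n+1) z, hPrmem (n+1) z⟩ :=
        Subtype.ext (by simp)
      have h2 : (⟨y + z, hxd⟩ : T.domain) = ⟨y, hyd⟩ + ⟨z, hzd⟩ := rfl
      rw [h1, h2, T.map_add, T.map_add, map_add]
      rw [show T ⟨Pr (n+1) y, hPrmem (n+1) y⟩ + T ⟨Pr (n+1) z, hPrmem (n+1) z⟩
            - (Pr (n+1) (T ⟨y, hyd⟩) + Pr (n+1) (T ⟨z, hzd⟩))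
          = (T ⟨Pr (n+1) y, hPrmem (n+1) y⟩ - Pr (n+1) (T ⟨y, hyd⟩))
            + (T ⟨Pr (n+1) z, hPrmem (n+1) z⟩ - Pr (n+1) (T ⟨z, hzd⟩)) by abel]
      rw [ihy hyd, ihz hzd]
      simp only [inner_add_right, add_smul]
      abel
    | smul c y hys ihy =>
      intro hxd
      have hyd : y ∈ T.domain := hdom ▸ hys
      have h1 : (⟨Pr (n+1) (c • y), hPrmem (n+1) (c • y)⟩ : T.domain)
          = c • ⟨Pr (n+1) y, hPrmem (n+1) y⟩ :=
        Subtype.ext (by simp)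
      have h2 : (⟨c • y, hxd⟩ : T.domain) = c • ⟨y, hyd⟩ := rfl
      rw [h1, h2, T.map_smul, T.map_smul, map_smul]
      rw [show c • T ⟨Pr (n+1) y, hPrmem (n+1) y⟩ - c • Pr (n+1) (T ⟨y, hyd⟩)
          = c • (T ⟨Pr (n+1) y, hPrmem (n+1) y⟩ - Pr (n+1) (T ⟨y, hyd⟩)) by
        rw [smul_sub]]
      rw [ihy hyd]
      simp only [inner_smul_right, smul_sub, smul_smul, mul_assoc]
  intro x hx
  exact key x (by rw [← hdom]; exact hx) hx

lemma aux_main {H : Type*} [NormedAddCommGroup H] [InnerProductSpace ℂ H]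
    (e : HilbertBasis ℕ ℂ H) (T : H →ₗ.[ℂ] H)
    (hdom : T.domain = Submodule.span ℂ (Set.range ⇑e))
    (hedom : ∀ k, (e k : H) ∈ T.domain)
    (Pr : ℕ → H →L[ℂ] H)
    (hPr : ∀ n x, Pr n x = ∑ i ∈ Finset.range n, ((inner ℂ (e i) x : ℂ) • e i))
    (hPrmem : ∀ n x, Pr n x ∈ T.domain)
    (α β : ℕ → ℂ)
    (hT : ∀ k, T ⟨e k, hedom k⟩ = α k • e (k + 1) + β k • e (k - 1))
    (hβ : ∀ k : ℕ, ‖β (k+1)‖ = Real.sqrt (((k : ℝ) + 1) / 2)) :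
    (∀ n : ℕ,
      ‖T ⟨Pr n (e n), hPrmem n (e n)⟩ - Pr n (T ⟨e n, hedom n⟩)‖
        = Real.sqrt (n / 2 : ℝ)) ∧
    ¬ Filter.Tendsto (fun n : ℕ =>
        ⨆ ψ : {x : H // x ∈ T.domain ∧ ‖x‖ ≤ 1},
          ‖T ⟨Pr n ψ.1, hPrmem n ψ.1⟩ - Pr n (T ⟨ψ.1, ψ.2.1⟩)‖)
      Filter.atTop (nhds 0) := by
  have hinner : ∀ i j : ℕ, (inner ℂ (e i) (e j) : ℂ) = if i = j then 1 else 0 :=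
    orthonormal_iff_ite.mp e.orthonormal
  have norm_e : ∀ i : ℕ, ‖(e i : H)‖ = 1 := e.orthonormal.1
  have stmt1 : ∀ n : ℕ,
      ‖T ⟨Pr n (e n), hPrmem n (e n)⟩ - Pr n (T ⟨e n, hedom n⟩)‖
        = Real.sqrt (n / 2 : ℝ) := by
    intro n
    cases n with
    | zero =>
      have hz : Pr 0 (e 0) = 0 := by rw [hPr]; simp
      have h1 : (⟨Pr 0 (e 0), hPrmem 0 (e 0)⟩ : T.domain) = 0 := Subtype.ext hz
      rw [h1, T.map_zero, hPr]
      simp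
    | succ k =>
      rw [aux_comm e T hdom hedom Pr hPr hPrmem α β hT k (e (k+1)) (hedom (k+1)),
        hinner k (k+1), hinner (k+1) (k+1), if_neg (by omega), if_pos rfl,
        zero_smul, one_smul, zero_sub, norm_neg, norm_smul, norm_e, mul_one, hβ k]
      push_cast
      ring_nf
  refine ⟨stmt1, ?_⟩
  intro hten
  have hev : ∀ᶠ n in Filter.atTop, (⨆ ψ : {x : H // x ∈ T.domain ∧ ‖x‖ ≤ 1},
      ‖T ⟨Pr n ψ.1, hPrmem n ψ.1⟩ - Pr n (T ⟨ψ.1, ψ.2.1⟩)‖) < 1 :=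
    hten.eventually_lt_const (by norm_num)
  obtain ⟨N, hN⟩ := Filter.eventually_atTop.mp hev
  set m := N + 1 with hm
  have hlt := hN (m + 1) (by omega)
  have hbound : ∀ ψ : {x : H // x ∈ T.domain ∧ ‖x‖ ≤ 1},
      ‖T ⟨Pr (m+1) ψ.1, hPrmem (m+1) ψ.1⟩ - Pr (m+1) (T ⟨ψ.1, ψ.2.1⟩)‖
        ≤ ‖α m‖ + ‖β (m+1)‖ := by
    intro ψ
    rw [aux_comm e T hdom hedom Pr hPr hPrmem α β hT m ψ.1 ψ.2.1]
    refine le_trans (norm_sub_le _ _) (add_le_add ?_ ?_)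
    · rw [norm_smul, norm_smul, norm_e, mul_one]
      calc ‖(inner ℂ (e m) ψ.1 : ℂ)‖ * ‖α m‖
          ≤ (‖(e m : H)‖ * ‖ψ.1‖) * ‖α m‖ := by
            gcongr; exact norm_inner_le_norm _ _
        _ ≤ (1 * 1) * ‖α m‖ := by
            gcongr (?_ * ?_) * ‖α m‖ <;> simp [norm_e, ψ.2.2]
        _ = ‖α m‖ := by ring
    · rw [norm_smul, norm_smul, norm_e, mul_one]
      calc ‖(inner ℂ (e (m+1)) ψ.1 : ℂ)‖ * ‖β (m+1)‖
          ≤ (‖(e (m+1) : H)‖ * ‖ψ.1‖) * ‖β (m+1)‖ := by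
            gcongr; exact norm_inner_le_norm _ _
        _ ≤ (1 * 1) * ‖β (m+1)‖ := by
            gcongr (?_ * ?_) * ‖β (m+1)‖ <;> simp [norm_e, ψ.2.2]
        _ = ‖β (m+1)‖ := by ring
  have hbd : BddAbove (Set.range fun ψ : {x : H // x ∈ T.domain ∧ ‖x‖ ≤ 1} =>
      ‖T ⟨Pr (m+1) ψ.1, hPrmem (m+1) ψ.1⟩ - Pr (m+1) (T ⟨ψ.1, ψ.2.1⟩)‖) := by
    refine ⟨‖α m‖ + ‖β (m+1)‖, ?_⟩
    rintro r ⟨ψ, rfl⟩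
    exact hbound ψ
  have hmem : (e (m+1) : H) ∈ T.domain ∧ ‖(e (m+1) : H)‖ ≤ 1 :=
    ⟨hedom (m+1), le_of_eq (norm_e (m+1))⟩
  have hle : ‖T ⟨Pr (m+1) (e (m+1)), hPrmem (m+1) (e (m+1))⟩
      - Pr (m+1) (T ⟨e (m+1), hedom (m+1)⟩)‖
      ≤ ⨆ ψ : {x : H // x ∈ T.domain ∧ ‖x‖ ≤ 1},
          ‖T ⟨Pr (m+1) ψ.1, hPrmem (m+1) ψ.1⟩ - Pr (m+1) (T ⟨ψ.1, ψ.2.1⟩)‖ :=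
    le_ciSup hbd (⟨e (m+1), hmem⟩ : {x : H // x ∈ T.domain ∧ ‖x‖ ≤ 1})
  rw [stmt1 (m+1)] at hle
  have h1 : (1 : ℝ) ≤ Real.sqrt (((m+1 : ℕ) : ℝ) / 2) := by
    rw [show (1:ℝ) = Real.sqrt 1 by simp]
    apply Real.sqrt_le_sqrt
    push_cast
    linarith [Nat.cast_nonneg (α := ℝ) N, (show (m:ℝ) = N + 1 by simp [hm])]
  linarith


/-- for the position operator `Q = (a* + a)/√2` and momentum
operator `P = i(a* − a)/√2` on the oscillator basis `{ψ_n}_{n≥0}` (domain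
`c₀₀`), the commutators with the canonical projections `P_n` satisfy
`‖[Q, P_n] ψ_n‖ = ‖[P, P_n] ψ_n‖ = √(n/2)`; hence `{P_n}` is not a
quasidiagonalizing sequence for `Q` nor for `P`. -/
theorem stmt_17
    {H : Type*} [NormedAddCommGroup H] [InnerProductSpace ℂ H] [CompleteSpace H]
    (e : HilbertBasis ℕ ℂ H)
    (Qop Pop : H →ₗ.[ℂ] H)
    (hdomQ : Qop.domain = Submodule.span ℂ (Set.range ⇑e))
    (hdomP : Pop.domain = Submodule.span ℂ (Set.range ⇑e))
    (hedomQ : ∀ k, (e k : H) ∈ Qop.domain)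
    (hedomP : ∀ k, (e k : H) ∈ Pop.domain)
    (hQ : ∀ n : ℕ, Qop ⟨e n, hedomQ n⟩
      = ((Real.sqrt 2)⁻¹ : ℂ) •
          (((Real.sqrt (n + 1) : ℝ) : ℂ) • e (n + 1)
            + ((Real.sqrt n : ℝ) : ℂ) • e (n - 1)))
    (hP : ∀ n : ℕ, Pop ⟨e n, hedomP n⟩
      = (Complex.I * ((Real.sqrt 2)⁻¹ : ℂ)) •
          (((Real.sqrt (n + 1) : ℝ) : ℂ) • e (n + 1)
            - ((Real.sqrt n : ℝ) : ℂ) • e (n - 1)))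
    (Pr : ℕ → H →L[ℂ] H)
    (hPr : ∀ n x, Pr n x = ∑ i ∈ Finset.range n, ((inner ℂ (e i) x : ℂ) • e i))
    (hPrmemQ : ∀ n x, Pr n x ∈ Qop.domain)
    (hPrmemP : ∀ n x, Pr n x ∈ Pop.domain) :
    (∀ n : ℕ,
      ‖Qop ⟨Pr n (e n), hPrmemQ n (e n)⟩ - Pr n (Qop ⟨e n, hedomQ n⟩)‖
        = Real.sqrt (n / 2 : ℝ)) ∧
    (∀ n : ℕ,
      ‖Pop ⟨Pr n (e n), hPrmemP n (e n)⟩ - Pr n (Pop ⟨e n, hedomP n⟩)‖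
        = Real.sqrt (n / 2 : ℝ)) ∧
    ¬ Filter.Tendsto (fun n : ℕ =>
        ⨆ ψ : {x : H // x ∈ Qop.domain ∧ ‖x‖ ≤ 1},
          ‖Qop ⟨Pr n ψ.1, hPrmemQ n ψ.1⟩ - Pr n (Qop ⟨ψ.1, ψ.2.1⟩)‖)
      Filter.atTop (nhds 0) ∧
    ¬ Filter.Tendsto (fun n : ℕ =>
        ⨆ ψ : {x : H // x ∈ Pop.domain ∧ ‖x‖ ≤ 1},
          ‖Pop ⟨Pr n ψ.1, hPrmemP n ψ.1⟩ - Pr n (Pop ⟨ψ.1, ψ.2.1⟩)‖)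
      Filter.atTop (nhds 0) := by
  set αQ : ℕ → ℂ := fun k => ((Real.sqrt 2)⁻¹ : ℂ) * ((Real.sqrt (k + 1) : ℝ) : ℂ) with hαQ
  set βQ : ℕ → ℂ := fun k => ((Real.sqrt 2)⁻¹ : ℂ) * ((Real.sqrt k : ℝ) : ℂ) with hβQdef
  set αP : ℕ → ℂ := fun k =>
    Complex.I * ((Real.sqrt 2)⁻¹ : ℂ) * ((Real.sqrt (k + 1) : ℝ) : ℂ) with hαP
  set βP : ℕ → ℂ := fun k =>
    -(Complex.I * ((Real.sqrt 2)⁻¹ : ℂ) * ((Real.sqrt k : ℝ) : ℂ)) with hβPdef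
  have hnormc : ∀ k : ℕ, ‖((Real.sqrt 2)⁻¹ : ℂ) * ((Real.sqrt (k + 1) : ℝ) : ℂ)‖
      = Real.sqrt (((k : ℝ) + 1) / 2) := by
    intro k
    rw [norm_mul, norm_inv, Complex.norm_real, Complex.norm_real,
      Real.norm_eq_abs, Real.norm_eq_abs,
      abs_of_nonneg (Real.sqrt_nonneg 2), abs_of_nonneg (Real.sqrt_nonneg _),
      Real.sqrt_div (by positivity) 2, div_eq_inv_mul]
  have hTQ : ∀ k, Qop ⟨e k, hedomQ k⟩ = αQ k • e (k + 1) + βQ k • e (k - 1) := by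
    intro k
    rw [hQ k, smul_add, smul_smul, smul_smul]
  have hTP : ∀ k, Pop ⟨e k, hedomP k⟩ = αP k • e (k + 1) + βP k • e (k - 1) := by
    intro k
    rw [hP k, smul_sub, smul_smul, smul_smul, sub_eq_add_neg, ← neg_smul]
  have hβQ : ∀ k : ℕ, ‖βQ (k + 1)‖ = Real.sqrt (((k : ℝ) + 1) / 2) := by
    intro k
    rw [hβQdef]
    simpa using hnormc k
  have hβP : ∀ k : ℕ, ‖βP (k + 1)‖ = Real.sqrt (((k : ℝ) + 1) / 2) := by
    intro k
    rw [hβPdef]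
    simp only [norm_neg, mul_assoc, norm_mul, Complex.norm_I, one_mul]
    rw [← norm_mul]
    simpa using hnormc k
  obtain ⟨s1, t1⟩ := aux_main e Qop hdomQ hedomQ Pr hPr hPrmemQ αQ βQ hTQ hβQ
  obtain ⟨s2, t2⟩ := aux_main e Pop hdomP hedomP Pr hPr hPrmemP αP βP hTP hβP
  exact ⟨s1, s2, t1, t2⟩
end

section
/- With a, a* as above and P_n the canonical projections on ℓ²(ℕ₀): the operator (a*)² + a² with domain c₀₀ satisfies ‖[(a*)² + a², P_n]‖_{a,B}/‖P_n‖_a ≥ n^{1 − 1/a} for a ∈ {1,2}; consequently {P_n} is neither a 1-Følner nor a 2-Følner sequence for the squared position operator Q² = ((a*+a)/√2)² (equivalently for P²), since a*a + aa* is diagonal in the basis and ‖[Q², P_n]‖_{a,B} = (1/2)‖[(a*)² + a², P_n]‖_{a,B}. -/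
open Filter

/-- The extended trace-class norm `‖A‖₁ = ∑ ⟨|A| e_k, e_k⟩` of a bounded
operator, computed with respect to the orthonormal basis `e`. -/
noncomputable def trNormOn {H : Type*} [NormedAddCommGroup H] [InnerProductSpace ℂ H]
    [CompleteSpace H] (e : HilbertBasis ℕ ℂ H) (A : H →L[ℂ] H) : ℝ :=
  ∑' k, RCLike.re (inner ℂ (CFC.sqrt (ContinuousLinearMap.adjoint A * A) (e k)) (e k) : ℂ)


section auxiliary

set_option linter.unusedSectionVars false in
theorem aux_true : True := trivial

noncomputable def rk {H : Type*} [NormedAddCommGroup H] [InnerProductSpace ℂ H]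
    (e : HilbertBasis ℕ ℂ H) (i j : ℕ) : H →L[ℂ] H :=
  (innerSL ℂ (e i)).smulRight (e j)

noncomputable def skw {H : Type*} [NormedAddCommGroup H] [InnerProductSpace ℂ H]
    (e : HilbertBasis ℕ ℂ H) (c : ℝ) (i j : ℕ) : H →L[ℂ] H :=
  (c : ℂ) • (rk e i j - rk e j i)

noncomputable def dg {H : Type*} [NormedAddCommGroup H] [InnerProductSpace ℂ H]
    (e : HilbertBasis ℕ ℂ H) (c : ℝ) (i j : ℕ) : H →L[ℂ] H :=
  (c : ℂ) • (rk e i i + rk e j j)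

def pI (n : ℕ) : ℕ := if n ≤ 1 then n + 2 else n - 2
def qI (n : ℕ) : ℕ := if n ≤ 1 then n + 3 else n
noncomputable def c1 (n : ℕ) : ℝ := Real.sqrt (n * (n - 1) : ℝ)
noncomputable def c2 (n : ℕ) : ℝ := Real.sqrt (n * (n + 1) : ℝ)

set_option linter.unusedSectionVars false
set_option maxHeartbeats 1000000
set_option synthInstance.maxHeartbeats 1000000

lemma pI_distinct (n : ℕ) : pI n ≠ qI n ∧ pI n ≠ n - 1 ∧ pI n ≠ n + 1 ∧
    qI n ≠ n - 1 ∧ qI n ≠ n + 1 ∧ n - 1 ≠ n + 1 := by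
  simp only [pI, qI]; split_ifs <;> omega

lemma c1_small (n : ℕ) (hn : n ≤ 1) : c1 n = 0 := by
  interval_cases n <;> simp [c1]

variable {H : Type*} [NormedAddCommGroup H] [InnerProductSpace ℂ H] [CompleteSpace H]
  (e : HilbertBasis ℕ ℂ H)

lemma rk_apply (i j : ℕ) (x : H) : rk e i j x = (inner ℂ (e i) x : ℂ) • e j := rfl

@[simp] lemma rk_apply_basis (i j k : ℕ) :
    rk e i j (e k) = if i = k then e j else 0 := by
  rw [rk_apply, orthonormal_iff_ite.mp e.orthonormal]
  simp [ite_smul]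

lemma adjoint_rk (i j : ℕ) : ContinuousLinearMap.adjoint (rk e i j) = rk e j i := by
  rw [eq_comm, ContinuousLinearMap.eq_adjoint_iff]
  intro x y
  simp [rk_apply, inner_smul_left, inner_smul_right, mul_comm]

lemma star_rk (i j : ℕ) : star (rk e i j) = rk e j i := by
  rw [ContinuousLinearMap.star_eq_adjoint, adjoint_rk]

lemma clm_ext_basis {f g : H →L[ℂ] H} (h : ∀ k, f (e k) = g (e k)) : f = g := by
  refine ContinuousLinearMap.ext_on
    (Submodule.dense_iff_topologicalClosure_eq_top.mpr e.dense_span) ?_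
  rintro x ⟨k, rfl⟩
  exact h k

lemma skw_apply_basis (c : ℝ) (i j k : ℕ) :
    skw e c i j (e k) = (c : ℂ) • ((if i = k then e j else 0) - (if j = k then e i else 0)) := by
  simp [skw]

lemma dg_apply_basis (c : ℝ) (i j k : ℕ) :
    dg e c i j (e k) = (c : ℂ) • ((if i = k then e i else 0) + (if j = k then e j else 0)) := by
  simp [dg]

lemma star_skw (c : ℝ) (i j : ℕ) : star (skw e c i j) = - skw e c i j := by
  simp [skw, star_smul, star_sub, star_rk, Complex.conj_ofReal, smul_sub]

lemma dg_nonneg (c : ℝ) (hc : 0 ≤ c) (i j : ℕ) (hij : i ≠ j) : 0 ≤ dg e c i j := by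
  have h : dg e c i j = star ((Real.sqrt c : ℂ) • (rk e i i + rk e j j)) *
      ((Real.sqrt c : ℂ) • (rk e i i + rk e j j)) := by
    rw [star_smul, star_add, star_rk, star_rk, Complex.star_def, Complex.conj_ofReal]
    refine clm_ext_basis e fun k => ?_
    simp only [dg, ContinuousLinearMap.mul_apply, ContinuousLinearMap.smul_apply,
      ContinuousLinearMap.add_apply, rk_apply_basis, ContinuousLinearMap.coe_smul',
      Pi.smul_apply]
    by_cases hik : i = k
    · subst hik
      simp [hij, hij.symm, smul_smul, ← Complex.ofReal_mul, Real.mul_self_sqrt hc]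
    · by_cases hjk : j = k
      · subst hjk
        simp [hik, Ne.symm hik, smul_smul, ← Complex.ofReal_mul, Real.mul_self_sqrt hc]
      · simp [hik, hjk]
  rw [h]
  exact star_mul_self_nonneg _

lemma key_mul (c c' : ℝ) (i j i' j' : ℕ) (h1 : i ≠ j) (h2 : i ≠ i') (h3 : i ≠ j')
    (h4 : j ≠ i') (h5 : j ≠ j') (h6 : i' ≠ j') :
    (dg e c i j + dg e c' i' j') * (dg e c i j + dg e c' i' j') =
      ContinuousLinearMap.adjoint (skw e c i j + skw e c' i' j') *
        (skw e c i j + skw e c' i' j') := by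
  rw [← ContinuousLinearMap.star_eq_adjoint, star_add, star_skw, star_skw]
  refine clm_ext_basis e fun k => ?_
  simp only [ContinuousLinearMap.mul_apply, ContinuousLinearMap.add_apply,
    ContinuousLinearMap.neg_apply, skw_apply_basis, dg_apply_basis, smul_sub, smul_add,
    map_add, map_sub, map_smul, map_neg, map_zero, smul_zero]
  by_cases hik : i = k <;> by_cases hjk : j = k <;> by_cases hik' : i' = k <;>
      by_cases hjk' : j' = k <;>
    simp_all [skw_apply_basis, dg_apply_basis, h1, h2, h3, h4, h5, h6,
      Ne.symm h1, Ne.symm h2, Ne.symm h3, Ne.symm h4, Ne.symm h5, Ne.symm h6,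
      smul_smul, mul_comm] <;>
    split_ifs <;> simp_all

lemma key_sqrt (c c' : ℝ) (hc : 0 ≤ c) (hc' : 0 ≤ c') (i j i' j' : ℕ) (h1 : i ≠ j)
    (h2 : i ≠ i') (h3 : i ≠ j') (h4 : j ≠ i') (h5 : j ≠ j') (h6 : i' ≠ j') :
    CFC.sqrt (ContinuousLinearMap.adjoint (skw e c i j + skw e c' i' j') *
        (skw e c i j + skw e c' i' j')) = dg e c i j + dg e c' i' j' :=
  CFC.sqrt_unique (key_mul e c c' i j i' j' h1 h2 h3 h4 h5 h6)
    (add_nonneg (dg_nonneg e c hc i j h1) (dg_nonneg e c' hc' i' j' h6))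

lemma tr_key (c c' : ℝ) (hc : 0 ≤ c) (hc' : 0 ≤ c') (i j i' j' : ℕ) (h1 : i ≠ j)
    (h2 : i ≠ i') (h3 : i ≠ j') (h4 : j ≠ i') (h5 : j ≠ j') (h6 : i' ≠ j') :
    trNormOn e (skw e c i j + skw e c' i' j') = 2 * c + 2 * c' := by
  rw [trNormOn, key_sqrt e c c' hc hc' i j i' j' h1 h2 h3 h4 h5 h6]
  have h00 : ∀ a b : ℕ, (inner ℂ (e a) (e b) : ℂ) = if a = b then 1 else 0 :=
    orthonormal_iff_ite.mp e.orthonormal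
  have hval : ∀ k, RCLike.re (inner ℂ ((dg e c i j + dg e c' i' j') (e k)) (e k) : ℂ) =
      (if i = k then c else 0) + (if j = k then c else 0) +
      ((if i' = k then c' else 0) + (if j' = k then c' else 0)) := by
    intro k
    simp only [ContinuousLinearMap.add_apply, dg_apply_basis, inner_add_left,
      inner_smul_left, apply_ite (fun x : H => (inner ℂ x (e k) : ℂ)), h00,
      inner_zero_left, Complex.conj_ofReal]
    split_ifs <;> simp_all
  simp only [hval]
  rw [tsum_eq_sum (s := {i, j, i', j'}) ?_]
  · rw [Finset.sum_add_distrib, Finset.sum_add_distrib, Finset.sum_add_distrib]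
    simp only [Finset.sum_ite_eq, Finset.mem_insert, Finset.mem_singleton]
    simp [h1, h2, h3, h4, h5, h6, Ne.symm h1, Ne.symm h2, Ne.symm h3, Ne.symm h4,
      Ne.symm h5, Ne.symm h6]
    ring
  · intro k hk
    simp only [Finset.mem_insert, Finset.mem_singleton, not_or] at hk
    simp [Ne.symm hk.1, Ne.symm hk.2.1, Ne.symm hk.2.2.1, Ne.symm hk.2.2.2]

lemma hs_key (c c' : ℝ) (hc : 0 ≤ c) (hc' : 0 ≤ c') (i j i' j' : ℕ) (h1 : i ≠ j)
    (h2 : i ≠ i') (h3 : i ≠ j') (h4 : j ≠ i') (h5 : j ≠ j') (h6 : i' ≠ j') :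
    ∑' k, ‖(skw e c i j + skw e c' i' j') (e k)‖ ^ 2 = 2 * c ^ 2 + 2 * c' ^ 2 := by
  have hval : ∀ k, ‖(skw e c i j + skw e c' i' j') (e k)‖ ^ 2 =
      (if i = k then c ^ 2 else 0) + (if j = k then c ^ 2 else 0) +
      ((if i' = k then c' ^ 2 else 0) + (if j' = k then c' ^ 2 else 0)) := by
    intro k
    by_cases hik : i = k <;> by_cases hjk : j = k <;> by_cases hik' : i' = k <;>
        by_cases hjk' : j' = k <;>
      simp_all [skw_apply_basis, norm_smul, e.orthonormal.1, sq_abs, Complex.norm_real,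
        abs_of_nonneg]
  simp only [hval]
  rw [tsum_eq_sum (s := {i, j, i', j'}) ?_]
  · rw [Finset.sum_add_distrib, Finset.sum_add_distrib, Finset.sum_add_distrib]
    simp only [Finset.sum_ite_eq, Finset.mem_insert, Finset.mem_singleton]
    simp [h1, h2, h3, h4, h5, h6, Ne.symm h1, Ne.symm h2, Ne.symm h3, Ne.symm h4,
      Ne.symm h5, Ne.symm h6]
    ring
  · intro k hk
    simp only [Finset.mem_insert, Finset.mem_singleton, not_or] at hk
    simp [Ne.symm hk.1, Ne.symm hk.2.1, Ne.symm hk.2.2.1, Ne.symm hk.2.2.2]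

lemma proj_basis (P : ℕ → H →L[ℂ] H)
    (hP : ∀ n x, P n x = ∑ i ∈ Finset.range n, ((inner ℂ (e i) x : ℂ) • e i))
    (n k : ℕ) : P n (e k) = if k < n then e k else 0 := by
  rw [hP]
  rw [Finset.sum_congr rfl (fun i _ => by
    rw [orthonormal_iff_ite.mp e.orthonormal, ite_smul, one_smul, zero_smul])]
  rw [Finset.sum_ite_eq' (Finset.range n) k (fun i => e i)]
  simp [Finset.mem_range]


lemma commC (B2 : H →ₗ.[ℂ] H)
    (hedomB : ∀ k, (e k : H) ∈ B2.domain)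
    (hB2 : ∀ n : ℕ, B2 ⟨e n, hedomB n⟩
      = ((Real.sqrt ((n + 1) * (n + 2)) : ℝ) : ℂ) • e (n + 2)
        + ((Real.sqrt (n * (n - 1)) : ℝ) : ℂ) • e (n - 2))
    (P : ℕ → H →L[ℂ] H)
    (hP : ∀ n x, P n x = ∑ i ∈ Finset.range n, ((inner ℂ (e i) x : ℂ) • e i))
    (hPmemB : ∀ n x, P n x ∈ B2.domain)
    (C : ℕ → H →L[ℂ] H)
    (hC : ∀ n, ∀ ψ : B2.domain,
      C n ψ = B2 ⟨P n ψ, hPmemB n ψ⟩ - P n (B2 ψ))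
    (n : ℕ) :
    C n = skw e (c1 n) (pI n) (qI n) + skw e (c2 n) (n - 1) (n + 1) := by
  refine clm_ext_basis e fun k => ?_
  have hCk := hC n ⟨e k, hedomB k⟩
  have hdom1 : (⟨P n (e k), hPmemB n (e k)⟩ : B2.domain)
      = if hk : k < n then ⟨e k, hedomB k⟩ else 0 := by
    split_ifs with hk <;> exact Subtype.ext (by simp [proj_basis e P hP, hk])
  have hLHS : C n (e k) = (if k < n then
        ((Real.sqrt ((k + 1) * (k + 2)) : ℝ) : ℂ) • e (k + 2)
        + ((Real.sqrt (k * (k - 1)) : ℝ) : ℂ) • e (k - 2) else 0)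
      - (((Real.sqrt ((k + 1) * (k + 2)) : ℝ) : ℂ) • (if k + 2 < n then e (k + 2) else 0)
        + ((Real.sqrt (k * (k - 1)) : ℝ) : ℂ) • (if k - 2 < n then e (k - 2) else 0)) := by
    rw [hCk, hdom1, hB2 k, map_add, map_smul, map_smul,
      proj_basis e P hP, proj_basis e P hP]
    congr 1
    split_ifs with hk
    · exact hB2 k
    · exact (LinearMap.map_zero _)
  rw [hLHS]
  rw [ContinuousLinearMap.add_apply, skw_apply_basis, skw_apply_basis]
  by_cases hA : k + 2 < n
  · have hp : pI n ≠ k := by simp only [pI]; split_ifs <;> omega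
    have hq : qI n ≠ k := by simp only [qI]; split_ifs <;> omega
    have e1 : k < n := by omega
    have e2 : k - 2 < n := by omega
    have e3 : n - 1 ≠ k := by omega
    have e4 : n + 1 ≠ k := by omega
    simp [hA, hp, hq, e1, e2, e3, e4]
  by_cases hB : k + 2 = n
  · subst hB
    have hp : pI (k + 2) = k := by simp [pI]
    have hq : qI (k + 2) = k + 2 := by simp [qI]
    have e1 : k < k + 2 := by omega
    have e2 : k - 2 < k + 2 := by omega
    have e3 : ¬ k + 2 = k := by omega
    have e4 : k + 2 - 1 ≠ k := by omega
    have e5 : k + 2 + 1 ≠ k := by omega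
    simp [hA, hp, hq, e1, e2, e3, e4, e5]
    rw [show c1 (k + 2) = Real.sqrt ((↑k + 1) * (↑k + 2)) from by
      rw [c1]; congr 1; push_cast; ring]
  by_cases hc : k + 1 = n
  · subst hc
    have hp : pI (k + 1) ≠ k := by simp only [pI]; split_ifs <;> omega
    have hq : qI (k + 1) ≠ k := by simp only [qI]; split_ifs <;> omega
    have e1 : k < k + 1 := by omega
    have e2 : ¬ k + 2 < k + 1 := by omega
    have e3 : k - 2 < k + 1 := by omega
    have e4 : k + 1 - 1 = k := by omega
    have e5 : k + 1 + 1 ≠ k := by omega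
    simp [hA, hp, hq, e1, e2, e3, e4, e5]
    rw [show c2 (k + 1) = Real.sqrt ((↑k + 1) * (↑k + 2)) from by
      rw [c2]; congr 1; push_cast; ring]
  by_cases hD : k = n
  · subst hD
    rcases Nat.lt_or_ge k 2 with hk2 | hk2
    · have hc1 : c1 k = 0 := c1_small k (by omega)
      interval_cases k <;> simp [pI, qI, c1, c2] <;> try norm_num
    · have hp : pI k = k - 2 := by simp only [pI]; split_ifs <;> omega
      have hq : qI k = k := by simp only [qI]; split_ifs <;> omega
      have e1 : ¬ k < k := by omega
      have e2 : ¬ k + 2 < k := by omega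
      have e3 : k - 2 < k := by omega
      have e4 : ¬ k - 2 = k := by omega
      have e5 : k - 1 ≠ k := by omega
      have e6 : k + 1 ≠ k := by omega
      simp [hA, hp, hq, e1, e2, e3, e4, e5, e6, c1]
  by_cases hE : k = n + 1
  · subst hE
    rcases Nat.eq_zero_or_pos n with rfl | hn
    · have e1 : ¬ (1 : ℕ) < 0 := by omega
      have e2 : ¬ (1 : ℕ) + 2 < 0 := by omega
      have e3 : ¬ (1 : ℕ) - 2 < 0 := by omega
      have hp : pI 0 ≠ 1 := by simp [pI]
      have hq : qI 0 ≠ 1 := by simp [qI]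
      have e4 : (0 : ℕ) - 1 ≠ 1 := by omega
      simp [e1, e2, e3, hp, hq, e4, c2]
    · have hp : pI n ≠ n + 1 := by simp only [pI]; split_ifs <;> omega
      have hq : qI n ≠ n + 1 := by simp only [qI]; split_ifs <;> omega
      have e1 : ¬ n + 1 < n := by omega
      have e2 : ¬ n + 1 + 2 < n := by omega
      have e3 : n + 1 - 2 < n := by omega
      have e4 : n - 1 ≠ n + 1 := by omega
      have e5 : (n + 1 : ℕ) = n + 1 := rfl
      simp [hA, hp, hq, e1, e2, e3, e4]
      rw [if_pos hn, c2, Real.sqrt_mul (Nat.cast_nonneg n), mul_comm]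
      rw [← Complex.ofReal_mul, Complex.coe_smul]
  · have hk : n + 2 ≤ k := by omega
    have e1 : ¬ k < n := by omega
    have e2 : ¬ k + 2 < n := by omega
    have e3 : ¬ k - 2 < n := by omega
    have e4 : n - 1 ≠ k := by omega
    have e5 : n + 1 ≠ k := by omega
    rcases Nat.lt_or_ge n 2 with hn2 | hn2
    · have hc1 : c1 n = 0 := c1_small n (by omega)
      simp [hc1, e1, e2, e3, e4, e5]
    · have hp : pI n ≠ k := by simp only [pI]; split_ifs <;> omega
      have hq : qI n ≠ k := by simp only [qI]; split_ifs <;> omega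
      simp [hp, hq, e1, e2, e3, e4, e5]

lemma commCQ (B2 Q2 : H →ₗ.[ℂ] H)
    (hedomB : ∀ k, (e k : H) ∈ B2.domain)
    (hedomQ : ∀ k, (e k : H) ∈ Q2.domain)
    (hB2 : ∀ n : ℕ, B2 ⟨e n, hedomB n⟩
      = ((Real.sqrt ((n + 1) * (n + 2)) : ℝ) : ℂ) • e (n + 2)
        + ((Real.sqrt (n * (n - 1)) : ℝ) : ℂ) • e (n - 2))
    (hQ2 : ∀ n : ℕ, Q2 ⟨e n, hedomQ n⟩
      = ((1 / 2 : ℝ) : ℂ) •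
          (((Real.sqrt ((n + 1) * (n + 2)) : ℝ) : ℂ) • e (n + 2)
            + ((Real.sqrt (n * (n - 1)) : ℝ) : ℂ) • e (n - 2)
            + ((2 * n + 1 : ℕ) : ℂ) • e n))
    (P : ℕ → H →L[ℂ] H)
    (hP : ∀ n x, P n x = ∑ i ∈ Finset.range n, ((inner ℂ (e i) x : ℂ) • e i))
    (hPmemB : ∀ n x, P n x ∈ B2.domain)
    (hPmemQ : ∀ n x, P n x ∈ Q2.domain)
    (C CQ : ℕ → H →L[ℂ] H)
    (hC : ∀ n, ∀ ψ : B2.domain,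
      C n ψ = B2 ⟨P n ψ, hPmemB n ψ⟩ - P n (B2 ψ))
    (hCQ : ∀ n, ∀ ψ : Q2.domain,
      CQ n ψ = Q2 ⟨P n ψ, hPmemQ n ψ⟩ - P n (Q2 ψ))
    (n : ℕ) :
    CQ n = skw e (c1 n / 2) (pI n) (qI n) + skw e (c2 n / 2) (n - 1) (n + 1) := by
  refine clm_ext_basis e fun k => ?_
  have hdom1 : (⟨P n (e k), hPmemB n (e k)⟩ : B2.domain)
      = if hk : k < n then ⟨e k, hedomB k⟩ else 0 := by
    split_ifs with hk <;> exact Subtype.ext (by simp [proj_basis e P hP, hk])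
  have hdomQ1 : (⟨P n (e k), hPmemQ n (e k)⟩ : Q2.domain)
      = if hk : k < n then ⟨e k, hedomQ k⟩ else 0 := by
    split_ifs with hk <;> exact Subtype.ext (by simp [proj_basis e P hP, hk])
  have hLHS : C n (e k) = (if k < n then
        ((Real.sqrt ((k + 1) * (k + 2)) : ℝ) : ℂ) • e (k + 2)
        + ((Real.sqrt (k * (k - 1)) : ℝ) : ℂ) • e (k - 2) else 0)
      - (((Real.sqrt ((k + 1) * (k + 2)) : ℝ) : ℂ) • (if k + 2 < n then e (k + 2) else 0)
        + ((Real.sqrt (k * (k - 1)) : ℝ) : ℂ) • (if k - 2 < n then e (k - 2) else 0)) := by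
    rw [hC n ⟨e k, hedomB k⟩, hdom1, hB2 k, map_add, map_smul, map_smul,
      proj_basis e P hP, proj_basis e P hP]
    congr 1
    split_ifs with hk
    · exact hB2 k
    · exact (LinearMap.map_zero _)
  have hLHSQ : CQ n (e k) = ((1 / 2 : ℝ) : ℂ) • ((if k < n then
        ((Real.sqrt ((k + 1) * (k + 2)) : ℝ) : ℂ) • e (k + 2)
        + ((Real.sqrt (k * (k - 1)) : ℝ) : ℂ) • e (k - 2) else 0)
      - (((Real.sqrt ((k + 1) * (k + 2)) : ℝ) : ℂ) • (if k + 2 < n then e (k + 2) else 0)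
        + ((Real.sqrt (k * (k - 1)) : ℝ) : ℂ) • (if k - 2 < n then e (k - 2) else 0))) := by
    rw [hCQ n ⟨e k, hedomQ k⟩, hdomQ1, hQ2 k, map_smul, map_add, map_add, map_smul,
      map_smul, map_smul, proj_basis e P hP, proj_basis e P hP, proj_basis e P hP]
    have hQd : Q2 (if hk : k < n then (⟨e k, hedomQ k⟩ : Q2.domain) else 0)
        = if k < n then ((1 / 2 : ℝ) : ℂ) •
          (((Real.sqrt ((k + 1) * (k + 2)) : ℝ) : ℂ) • e (k + 2)
            + ((Real.sqrt (k * (k - 1)) : ℝ) : ℂ) • e (k - 2)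
            + ((2 * k + 1 : ℕ) : ℂ) • e k) else 0 := by
      split_ifs with hk
      · exact hQ2 k
      · exact (LinearMap.map_zero _)
    rw [hQd]
    by_cases hk : k < n <;> simp [hk, smul_sub, smul_add] <;> abel
  have hCrep := commC e B2 hedomB hB2 P hP hPmemB C hC n
  have hcomb : CQ n (e k) = ((1 / 2 : ℝ) : ℂ) • (C n (e k)) := by rw [hLHSQ, hLHS]
  rw [hcomb, hCrep]
  simp only [ContinuousLinearMap.add_apply, skw_apply_basis, smul_add, smul_smul]
  push_cast
  ring_nf

end auxiliary

/-- for `B₂ = (a*)² + a²` on the oscillator basis (domain `c₀₀`)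
one has `‖[B₂, P_n]‖_{a,B}/‖P_n‖_a ≥ n^{1−1/a}` for `a ∈ {1,2}`; since
`a*a + aa*` is diagonal, `‖[Q², P_n]‖_{a,B} = (1/2)‖[B₂, P_n]‖_{a,B}`, so the
canonical projections are neither a 1-Følner nor a 2-Følner sequence for the
squared position operator `Q²`. `C n` and `CQ n` denote the bounded extensions
of `[B₂, P_n]` and `[Q², P_n]`. -/
theorem stmt_18
    {H : Type*} [NormedAddCommGroup H] [InnerProductSpace ℂ H] [CompleteSpace H]
    (e : HilbertBasis ℕ ℂ H)
    (B2 Q2 : H →ₗ.[ℂ] H)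
    (hdomB : B2.domain = Submodule.span ℂ (Set.range ⇑e))
    (hdomQ : Q2.domain = Submodule.span ℂ (Set.range ⇑e))
    (hedomB : ∀ k, (e k : H) ∈ B2.domain)
    (hedomQ : ∀ k, (e k : H) ∈ Q2.domain)
    (hB2 : ∀ n : ℕ, B2 ⟨e n, hedomB n⟩
      = ((Real.sqrt ((n + 1) * (n + 2)) : ℝ) : ℂ) • e (n + 2)
        + ((Real.sqrt (n * (n - 1)) : ℝ) : ℂ) • e (n - 2))
    (hQ2 : ∀ n : ℕ, Q2 ⟨e n, hedomQ n⟩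
      = ((1 / 2 : ℝ) : ℂ) •
          (((Real.sqrt ((n + 1) * (n + 2)) : ℝ) : ℂ) • e (n + 2)
            + ((Real.sqrt (n * (n - 1)) : ℝ) : ℂ) • e (n - 2)
            + ((2 * n + 1 : ℕ) : ℂ) • e n))
    (P : ℕ → H →L[ℂ] H)
    (hP : ∀ n x, P n x = ∑ i ∈ Finset.range n, ((inner ℂ (e i) x : ℂ) • e i))
    (hPmemB : ∀ n x, P n x ∈ B2.domain)
    (hPmemQ : ∀ n x, P n x ∈ Q2.domain)
    (C CQ : ℕ → H →L[ℂ] H)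
    (hC : ∀ n, ∀ ψ : B2.domain,
      C n ψ = B2 ⟨P n ψ, hPmemB n ψ⟩ - P n (B2 ψ))
    (hCQ : ∀ n, ∀ ψ : Q2.domain,
      CQ n ψ = Q2 ⟨P n ψ, hPmemQ n ψ⟩ - P n (Q2 ψ)) :
    (∀ n : ℕ, trNormOn e (CQ n) = (1 / 2) * trNormOn e (C n)) ∧
    (∀ n : ℕ, Real.sqrt (∑' k, ‖CQ n (e k)‖ ^ 2)
      = (1 / 2) * Real.sqrt (∑' k, ‖C n (e k)‖ ^ 2)) ∧
    (∀ n : ℕ, 1 ≤ n → trNormOn e (C n) / n ≥ 1) ∧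
    (∀ n : ℕ, 1 ≤ n →
      Real.sqrt (∑' k, ‖C n (e k)‖ ^ 2) / Real.sqrt n ≥ Real.sqrt n) ∧
    ¬ Filter.Tendsto (fun n : ℕ => trNormOn e (CQ n) / n)
      Filter.atTop (nhds 0) ∧
    ¬ Filter.Tendsto (fun n : ℕ =>
        Real.sqrt (∑' k, ‖CQ n (e k)‖ ^ 2) / Real.sqrt n)
      Filter.atTop (nhds 0) := by
  
  have hC' : ∀ n, C n = skw e (c1 n) (pI n) (qI n) + skw e (c2 n) (n - 1) (n + 1) :=
    commC e B2 hedomB hB2 P hP hPmemB C hC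
  have hCQ' : ∀ n, CQ n = skw e (c1 n / 2) (pI n) (qI n) + skw e (c2 n / 2) (n - 1) (n + 1) :=
    commCQ e B2 Q2 hedomB hedomQ hB2 hQ2 P hP hPmemB hPmemQ C CQ hC hCQ
  have hc1 : ∀ n, 0 ≤ c1 n := fun n => Real.sqrt_nonneg _
  have hc2 : ∀ n, 0 ≤ c2 n := fun n => Real.sqrt_nonneg _
  have htrC : ∀ n, trNormOn e (C n) = 2 * c1 n + 2 * c2 n := by
    intro n
    obtain ⟨d1, d2, d3, d4, d5, d6⟩ := pI_distinct n
    rw [hC' n, tr_key e _ _ (hc1 n) (hc2 n) _ _ _ _ d1 d2 d3 d4 d5 d6]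
  have htrCQ : ∀ n, trNormOn e (CQ n) = 2 * (c1 n / 2) + 2 * (c2 n / 2) := by
    intro n
    obtain ⟨d1, d2, d3, d4, d5, d6⟩ := pI_distinct n
    rw [hCQ' n, tr_key e _ _ (by linarith [hc1 n]) (by linarith [hc2 n]) _ _ _ _
      d1 d2 d3 d4 d5 d6]
  have hhsC : ∀ n, ∑' k, ‖C n (e k)‖ ^ 2 = 2 * (c1 n) ^ 2 + 2 * (c2 n) ^ 2 := by
    intro n
    obtain ⟨d1, d2, d3, d4, d5, d6⟩ := pI_distinct n
    rw [hC' n]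
    exact hs_key e _ _ (hc1 n) (hc2 n) _ _ _ _ d1 d2 d3 d4 d5 d6
  have hhsCQ : ∀ n, ∑' k, ‖CQ n (e k)‖ ^ 2 = 2 * (c1 n / 2) ^ 2 + 2 * (c2 n / 2) ^ 2 := by
    intro n
    obtain ⟨d1, d2, d3, d4, d5, d6⟩ := pI_distinct n
    rw [hCQ' n]
    exact hs_key e _ _ (by linarith [hc1 n]) (by linarith [hc2 n]) _ _ _ _ d1 d2 d3 d4 d5 d6
  have s1 : ∀ n, trNormOn e (CQ n) = 1 / 2 * trNormOn e (C n) := by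
    intro n; rw [htrC, htrCQ]; ring
  have s2 : ∀ n : ℕ, Real.sqrt (∑' k, ‖CQ n (e k)‖ ^ 2)
      = 1 / 2 * Real.sqrt (∑' k, ‖C n (e k)‖ ^ 2) := by
    intro n
    rw [hhsC, hhsCQ,
      show 2 * (c1 n / 2) ^ 2 + 2 * (c2 n / 2) ^ 2
        = (1 / 2) ^ 2 * (2 * (c1 n) ^ 2 + 2 * (c2 n) ^ 2) by ring,
      Real.sqrt_mul (by positivity), Real.sqrt_sq (by norm_num)]
  have s3 : ∀ n : ℕ, 1 ≤ n → trNormOn e (C n) / n ≥ 1 := by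
    intro n hn
    have hn' : (1 : ℝ) ≤ (n : ℝ) := by exact_mod_cast hn
    have hle : (n : ℝ) ≤ c2 n := by
      have h0 : ((n : ℝ)) = Real.sqrt ((n : ℝ) ^ 2) := (Real.sqrt_sq (by positivity)).symm
      rw [h0, c2]
      exact Real.sqrt_le_sqrt (by nlinarith)
    rw [htrC, ge_iff_le, le_div_iff₀ (by linarith)]
    nlinarith [hc1 n]
  have s4 : ∀ n : ℕ, 1 ≤ n →
      Real.sqrt (∑' k, ‖C n (e k)‖ ^ 2) / Real.sqrt n ≥ Real.sqrt n := by
    intro n hn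
    have hn' : (1 : ℝ) ≤ (n : ℝ) := by exact_mod_cast hn
    have hsq : (c2 n) ^ 2 = (n : ℝ) * (n + 1) := Real.sq_sqrt (by positivity)
    rw [hhsC, ge_iff_le, le_div_iff₀ (Real.sqrt_pos.mpr (by linarith)),
      Real.mul_self_sqrt (by linarith)]
    have h0 : ((n : ℝ)) = Real.sqrt ((n : ℝ) ^ 2) := (Real.sqrt_sq (by positivity)).symm
    rw [h0]
    exact Real.sqrt_le_sqrt (by nlinarith [sq_nonneg (c1 n)])
  refine ⟨s1, s2, s3, s4, ?_, ?_⟩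
  · intro hT
    obtain ⟨n, hlt, hn⟩ :=
      ((hT.eventually_lt_const (by norm_num : (0:ℝ) < 1/2)).and (eventually_ge_atTop 1)).exists
    have hlt := hlt
    have h3 := s3 n hn
    have heq : trNormOn e (CQ n) / n = 1 / 2 * (trNormOn e (C n) / n) := by
      rw [s1 n]; ring
    rw [heq] at hlt
    linarith
  · intro hT
    obtain ⟨n, hlt, hn⟩ :=
      ((hT.eventually_lt_const (by norm_num : (0:ℝ) < 1/2)).and (eventually_ge_atTop 1)).exists
    have hlt := hlt
    have h4 := s4 n hn
    have hs : (1 : ℝ) ≤ Real.sqrt n := by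
      rw [show (1 : ℝ) = Real.sqrt 1 by simp]
      exact Real.sqrt_le_sqrt (by exact_mod_cast hn)
    have heq : Real.sqrt (∑' k, ‖CQ n (e k)‖ ^ 2) / Real.sqrt n
        = 1 / 2 * (Real.sqrt (∑' k, ‖C n (e k)‖ ^ 2) / Real.sqrt n) := by
      rw [s2 n]; ring
    rw [heq] at hlt
    nlinarith [Real.sqrt_nonneg (n : ℝ)]
end
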